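/- arXiv:2602.15177 — 2 statements merged into one kernel-verified Lean document; each statement's English description precedes it below -/
import Mathlib

section
/- If there exist α₀ ∈ [0,1) and x₀ > 0 such that the value function satisfies u^{α₀}(x₀) < ∞, then u^α(x) < ∞ for all x > 0 and all α ∈ [0,1). -/
open MeasureTheory Filter Finset

noncomputable section
open scoped Classical

/-- Euclidean inner product on `Fin d → ℝ`. -/
def dotp {d : ℕ} (a b : Fin d → ℝ) : ℝ := ∑ j, a j * b j

/-- Euclidean norm on `Fin d → ℝ`. -/
def eucNorm {d : ℕ} (a : Fin d → ℝ) : ℝ := Real.sqrt (∑ j, a j ^ 2)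

/-- Accumulated realized gains and losses `G_t`, given the bank account history `eta`:
`G_t = ∑_{u=1}^t ( η_{u-1} r_u + ∑_{i=0}^{u-1} ⟨N_{i,u-1} - N_{i,u}, S_u - S_i⟩ )`. -/
def Gaux {d : ℕ} (S : ℕ → Fin d → ℝ) (r : ℕ → ℝ) (N : ℕ → ℕ → Fin d → ℝ)
    (eta : ℕ → ℝ) (t : ℕ) : ℝ :=
  ∑ u ∈ Finset.Icc 1 t,
    (eta (u - 1) * r u +
      ∑ i ∈ Finset.range u, dotp (fun j => N i (u - 1) j - N i u j) (fun j => S u j - S i j))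

/-- Limited-use-of-losses tax payments `Π_t = α · max_{0 ≤ u ≤ t} G_u`. -/
def Piaux {d : ℕ} (α : ℝ) (S : ℕ → Fin d → ℝ) (r : ℕ → ℝ) (N : ℕ → ℕ → Fin d → ℝ)
    (eta : ℕ → ℝ) (t : ℕ) : ℝ :=
  α * (Finset.range (t + 1)).sup' Finset.nonempty_range_add_one (fun u => Gaux S r N eta u)

/-- `etaHist α x S r N t` is the bank-account history after trading and taxes, up to time `t`:
for `s ≤ t` it gives `η_s`, and for `s > t` it gives `η_t`.  It is defined by the
self-financing recursion `η_{-1} = x`,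
`η_t - η_{t-1} = r_t η_{t-1} 1_{t ≥ 1} + ⟨∑_{i<t}(N_{i,t-1} - N_{i,t}) - N_{t,t}, S_t⟩
  - (Π_t - Π_{t-1}) 1_{t ≥ 1}`. -/
def etaHist {d : ℕ} (α x : ℝ) (S : ℕ → Fin d → ℝ) (r : ℕ → ℝ)
    (N : ℕ → ℕ → Fin d → ℝ) : ℕ → ℕ → ℝ :=
  Nat.rec (motive := fun _ => ℕ → ℝ)
    (fun _ => x - dotp (fun j => N 0 0 j) (fun j => S 0 j))
    (fun t e => fun s =>
      if s ≤ t then e s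
      else
        e t + r (t + 1) * e t
          + dotp
              (fun j => (∑ i ∈ Finset.range (t + 1), (N i t j - N i (t + 1) j))
                - N (t + 1) (t + 1) j)
              (fun j => S (t + 1) j)
          - (Piaux α S r N e (t + 1) - Piaux α S r N e t))

/-- A discrete-time market with horizon `T`, `d` risky assets, a filtration `F`,
adapted nonnegative-price processes are not required in general, and a nonnegative adapted
interest-rate process `r`. -/
structure Market (Ω : Type*) [m0 : MeasurableSpace Ω] (T d : ℕ) where
  P : Measure Ω
  hProb : IsProbabilityMeasure P
  F : ℕ → MeasurableSpace Ω
  F_le : ∀ t, F t ≤ m0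
  F_mono : Monotone F
  S : ℕ → Ω → Fin d → ℝ
  S_adapted : ∀ t, Measurable[F t] (S t)
  r : ℕ → Ω → ℝ
  r_nonneg : ∀ t ω, 0 ≤ r t ω
  r_adapted : ∀ t, Measurable[F t] (r t)

variable {Ω : Type*} [m0 : MeasurableSpace Ω] {T d : ℕ}

/-- A trading strategy: `N i t ω j` is the number of shares of asset `j` bought at time `i`
and still held after trading at time `t`.  It is `F t`-adapted, nonnegative, nonincreasing
in `t` (for `i ≤ t < T`), forced to liquidate at `T`, and zero before the purchase date. -/
def Market.IsStrategy (M : Market Ω T d) (N : ℕ → ℕ → Ω → Fin d → ℝ) : Prop :=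
  (∀ i t, Measurable[M.F t] (N i t)) ∧
  (∀ i t ω j, 0 ≤ N i t ω j) ∧
  (∀ i t, i ≤ t → t < T → ∀ ω j, N i (t + 1) ω j ≤ N i t ω j) ∧
  (∀ i ω j, N i T ω j = 0) ∧
  (∀ i t, t < i → ∀ ω j, N i t ω j = 0)

/-- After-tax terminal wealth `V^α(x,N) = η_T`. -/
def Market.V (M : Market Ω T d) (α x : ℝ) (N : ℕ → ℕ → Ω → Fin d → ℝ) (ω : Ω) : ℝ :=
  etaHist α x (fun t => M.S t ω) (fun t => M.r t ω) (fun i t => N i t ω) T T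

/-- The frictionless (tax-free) wealth process `V^0_t(x,N) = η_t + ⟨∑_{i≤t} N_{i,t}, S_t⟩`,
where `η` is the bank account for tax rate `0`. -/
def Market.V0proc (M : Market Ω T d) (x : ℝ) (N : ℕ → ℕ → Ω → Fin d → ℝ) (t : ℕ) (ω : Ω) : ℝ :=
  etaHist 0 x (fun u => M.S u ω) (fun u => M.r u ω) (fun i u => N i u ω) t t
    + dotp (fun j => ∑ i ∈ Finset.range (t + 1), N i t ω j) (fun j => M.S t ω j)

/-- The no-arbitrage condition for tax rate `α`. -/
def Market.NA (M : Market Ω T d) (α : ℝ) : Prop :=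
  ∀ N, M.IsStrategy N → (∀ᵐ ω ∂M.P, 0 ≤ M.V α 0 N ω) → ∀ᵐ ω ∂M.P, M.V α 0 N ω = 0

/-- The set `{V^α(x,N) : N ∈ 𝒩} - L^0(F_T; ℝ₊)` of attainable after-tax terminal wealths. -/
def Market.Vset (M : Market Ω T d) (α x : ℝ) : Set (Ω → ℝ) :=
  {f | ∃ N, M.IsStrategy N ∧
    ∃ g : Ω → ℝ, Measurable[M.F T] g ∧ (∀ ω, 0 ≤ g ω) ∧ f = fun ω => M.V α x N ω - g ω}

/-- The frictionless wealth recursion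
`V_t = (1+r_t) V_{t-1} + ⟨∑_{i<t} N_{i,t-1}, S_t - (1+r_t) S_{t-1}⟩`. -/
def wealth0 {d : ℕ} (S : ℕ → Fin d → ℝ) (r : ℕ → ℝ) (N : ℕ → ℕ → Fin d → ℝ) (x : ℝ) :
    ℕ → ℝ :=
  Nat.rec (motive := fun _ => ℝ) x (fun t W =>
    (1 + r (t + 1)) * W
      + dotp (fun j => ∑ i ∈ Finset.range (t + 1), N i t j)
          (fun j => S (t + 1) j - (1 + r (t + 1)) * S t j))

/-- Frictionless terminal wealth `V^0(x,N)`. -/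
def Market.V0 (M : Market Ω T d) (x : ℝ) (N : ℕ → ℕ → Ω → Fin d → ℝ) (ω : Ω) : ℝ :=
  wealth0 (fun t => M.S t ω) (fun t => M.r t ω) (fun i t => N i t ω) x T

/-- No-arbitrage for the frictionless model. -/
def Market.NA0 (M : Market Ω T d) : Prop :=
  ∀ N, M.IsStrategy N → (∀ᵐ ω ∂M.P, 0 ≤ M.V0 0 N ω) → ∀ᵐ ω ∂M.P, M.V0 0 N ω = 0

/-- The cone `ℛ_t` of reversible one-period strategies. -/
def Market.RevCone (M : Market Ω T d) (t : ℕ) : Set (Ω → Fin d → ℝ) :=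
  {β | Measurable[M.F t] β ∧ (∀ ω j, 0 ≤ β ω j) ∧
    ∀ᵐ ω ∂M.P, dotp (β ω) (fun j => M.S (t + 1) ω j - (1 + M.r (t + 1) ω) * M.S t ω j) = 0}

/-- `q` is the purely nonreversible part `q_t(β)` of `β`: it is `F_t`-measurable, nonnegative,
`β - q` is reversible, and `q` has minimal Euclidean norm among all such decompositions. -/
def Market.IsQ (M : Market Ω T d) (t : ℕ) (β q : Ω → Fin d → ℝ) : Prop :=
  Measurable[M.F t] q ∧ (∀ ω j, 0 ≤ q ω j) ∧
  (fun ω j => β ω j - q ω j) ∈ M.RevCone t ∧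
  ∀ q' : Ω → Fin d → ℝ, Measurable[M.F t] q' → (∀ ω j, 0 ≤ q' ω j) →
    (fun ω j => β ω j - q' ω j) ∈ M.RevCone t →
    ∀ᵐ ω ∂M.P, eucNorm (q ω) ≤ eucNorm (q' ω)

/-- `β` is purely nonreversible, i.e. `q_t(β) = β`. -/
def Market.PurelyNonRev (M : Market Ω T d) (t : ℕ) (β : Ω → Fin d → ℝ) : Prop :=
  M.IsQ t β β

/-- A reaction function: `R ω a i t` may depend on `ω` only through `F_t` and on the action
history `a` only through the actions up to time `t`; it is nonnegative, nonincreasing in `t`,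
vanishes at and after the horizon `T` and before the purchase date. -/
structure ReactionFun (M : Market Ω T d) where
  R : Ω → (ℕ → ℕ → Fin d → ℝ) → ℕ → ℕ → Fin d → ℝ
  nonneg : ∀ ω a i t j, 0 ≤ R ω a i t j
  adapted_actions : ∀ ω a a' i t, (∀ i' t', t' ≤ t → a i' t' = a' i' t') →
    R ω a i t = R ω a' i t
  meas : ∀ i t, Measurable[(M.F t).prod inferInstance]
    (fun p : Ω × (ℕ → ℕ → Fin d → ℝ) => R p.1 p.2 i t)
  antitone : ∀ ω a i t, i ≤ t → t + 2 ≤ T → ∀ j, R ω a i (t + 1) j ≤ R ω a i t j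
  upper : ∀ ω a i t, T ≤ t → ∀ j, R ω a i t j = 0
  lower : ∀ ω a i t, t < i → ∀ j, R ω a i t j = 0

/-- The strategy `R(N)` produced by a reaction function from a strategy `N`. -/
def ReactionFun.apply {M : Market Ω T d} (Rf : ReactionFun M)
    (N : ℕ → ℕ → Ω → Fin d → ℝ) : ℕ → ℕ → Ω → Fin d → ℝ :=
  fun i t ω => Rf.R ω (fun i' t' => N i' t' ω) i t

/-- `max_{i=0,…,T-1, j=1,…,d} N_{i,i,j}`. -/
def stratMax {Ω : Type*} {d : ℕ} (T : ℕ) (N : ℕ → ℕ → Ω → Fin d → ℝ) (ω : Ω) : ℝ :=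
  ⨆ i ∈ Finset.range T, ⨆ j : Fin d, N i i ω j

/-- A family of random variables is bounded in `L⁰` (bounded in probability). -/
def BoundedInL0 {Ω : Type*} [MeasurableSpace Ω] (P : Measure Ω) (𝒮 : Set (Ω → ℝ)) : Prop :=
  ∀ ε : ℝ, 0 < ε → ∃ C : ℝ, ∀ f ∈ 𝒮, P {ω | C < |f ω|} ≤ ENNReal.ofReal ε

/-- The "no unbounded non-substitutable investment with bounded risk" condition. -/
def Market.NUIBR (M : Market Ω T d) (α : ℝ) : Prop :=
  ∀ x : ℝ, ∃ Rf : ReactionFun M,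
    (∀ N, M.IsStrategy N → M.IsStrategy (Rf.apply N)) ∧
    (∀ N, M.IsStrategy N → ∀ᵐ ω ∂M.P, M.V α x N ω ≤ M.V α x (Rf.apply N) ω) ∧
    ∀ K : ℝ, 0 ≤ K →
      BoundedInL0 M.P (convexHull ℝ
        {f : Ω → ℝ | ∃ N, M.IsStrategy N ∧ (∀ᵐ ω ∂M.P, -K ≤ M.V α x N ω) ∧
          f = stratMax T (Rf.apply N)})

/-- A set of random variables is closed with respect to convergence in probability
(as a subset of `L⁰`, i.e. up to almost-sure equality). -/
def ClosedInProbability {Ω : Type*} [MeasurableSpace Ω] (P : Measure Ω)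
    (𝒮 : Set (Ω → ℝ)) : Prop :=
  ∀ (f : ℕ → Ω → ℝ) (g : Ω → ℝ), (∀ n, f n ∈ 𝒮) →
    TendstoInMeasure P f Filter.atTop g → ∃ g' ∈ 𝒮, g' =ᵐ[P] g


/-- Bank account process for an artificial linear tax rule `τ`:
taxes `Π^{(τ)}_t = α · G_{τ_t}` are paid according to the rule `τ` (with `τ 0 = 0`,
so that `Π^{(τ)}_0 = 0`).  `etaTau α x S r N τ t s` gives `η^{(τ)}_s` for `s ≤ t`. -/
def etaTau {d : ℕ} (α x : ℝ) (S : ℕ → Fin d → ℝ) (r : ℕ → ℝ)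
    (N : ℕ → ℕ → Fin d → ℝ) (τ : ℕ → ℕ) : ℕ → ℕ → ℝ :=
  Nat.rec (motive := fun _ => ℕ → ℝ)
    (fun _ => x - dotp (fun j => N 0 0 j) (fun j => S 0 j))
    (fun t e => fun s =>
      if s ≤ t then e s
      else
        e t + r (t + 1) * e t
          + dotp
              (fun j => (∑ i ∈ Finset.range (t + 1), (N i t j - N i (t + 1) j))
                - N (t + 1) (t + 1) j)
              (fun j => S (t + 1) j)
          - (α * Gaux S r N e (τ (t + 1)) - α * Gaux S r N e (τ t)))

variable {Ω : Type*} [m0 : MeasurableSpace Ω] {T d : ℕ}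

/-- An artificial linear tax rule: an adapted `{0,…,T}`-valued process `τ` with `τ_0 = 0`,
`τ` nondecreasing in `t`, `τ_t ≤ t`, and `τ_{τ_t} = τ_t` whenever `τ_t ≥ 1`. -/
def Market.IsTaxRule (M : Market Ω T d) (τ : ℕ → Ω → ℕ) : Prop :=
  (∀ ω, τ 0 ω = 0) ∧
  (∀ t, Measurable[M.F t] (τ t)) ∧
  (∀ t ω, τ t ω ≤ t) ∧
  (∀ t ω, τ t ω ≤ T) ∧
  (∀ s t, s ≤ t → ∀ ω, τ s ω ≤ τ t ω) ∧
  (∀ t ω, 1 ≤ τ t ω → τ (τ t ω) ω = τ t ω)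

/-- Terminal bank account `η^{(τ)}_T(N)` under the artificial tax rule `τ`. -/
def Market.etaTauT (M : Market Ω T d) (α x : ℝ) (N : ℕ → ℕ → Ω → Fin d → ℝ)
    (τ : ℕ → Ω → ℕ) (ω : Ω) : ℝ :=
  etaTau α x (fun t => M.S t ω) (fun t => M.r t ω) (fun i t => N i t ω) (fun t => τ t ω) T T

/-- A strategy realizes losses: it does not keep shares that trade below their purchase
price. -/
def Market.RealizesLosses (M : Market Ω T d) (N : ℕ → ℕ → Ω → Fin d → ℝ) : Prop :=
  ∀ i t j, i < t → t ≤ T → ∀ᵐ ω ∂M.P, M.S t ω j < M.S i ω j → N i t ω j = 0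

/-- The loss bound `L_t(N) = ((−x) ∨ 0 + ∑_{s<t} ⟨q_s(∑_{i≤s} N_{i,s}), S_s⟩)(1+r̄)^T`,
expressed through a given family `q s` of purely nonreversible parts. -/
def Lfun {Ω : Type*} {d : ℕ} (x rbar : ℝ) (T : ℕ) (S : ℕ → Ω → Fin d → ℝ)
    (q : ℕ → Ω → Fin d → ℝ) (t : ℕ) (ω : Ω) : ℝ :=
  (max (-x) 0 + ∑ s ∈ Finset.range t, dotp (q s ω) (fun j => S s ω j)) * (1 + rbar) ^ T

/-- A stopping time of the filtration `F`. -/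
def IsStoppingTimeFun {Ω : Type*} (F : ℕ → MeasurableSpace Ω) (τ : Ω → ℕ) : Prop :=
  ∀ t : ℕ, MeasurableSet[F t] {ω | τ ω ≤ t}

/-- The family of random variables over which the essential infimum defining `ε_t` is
taken. -/
def Market.epsFamily (M : Market Ω T d) (t : ℕ) : Set (Ω → ENNReal) :=
  {g | ∃ (ε : Ω → ℝ) (A : Set Ω) (N : ℕ → ℕ → Ω → Fin d → ℝ),
    Measurable[M.F t] ε ∧ (∀ ω, ε ω ∈ Set.Icc (0:ℝ) 1) ∧
    MeasurableSet[M.F t] A ∧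
    M.IsStrategy N ∧ (∀ i, i < t → ∀ ω j, N i i ω j = 0) ∧
    M.PurelyNonRev t (fun ω => N t t ω) ∧
    (∀ᵐ ω ∂M.P, eucNorm (N t t ω) = Set.indicator A (fun _ => (1:ℝ)) ω) ∧
    (∀ᵐ ω ∂M.P,
      (M.P[Set.indicator {ω' | M.V0 0 N ω' ≤ - ε ω'} (fun _ => (1:ℝ)) | M.F t]) ω ≤ ε ω) ∧
    g = fun ω => if ω ∈ A then ENNReal.ofReal (ε ω) else (⊤ : ENNReal)}

/-- `e` is the essential infimum of the family `𝒮` of `[0,∞]`-valued random variables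
(with respect to `P`, measurable with respect to `m'`). -/
def IsEssInfOfSet {Ω : Type*} [MeasurableSpace Ω] (m' : MeasurableSpace Ω) (P : Measure Ω)
    (𝒮 : Set (Ω → ENNReal)) (e : Ω → ENNReal) : Prop :=
  Measurable[m'] e ∧ (∀ g ∈ 𝒮, ∀ᵐ ω ∂P, e ω ≤ g ω) ∧
  ∀ e' : Ω → ENNReal, Measurable[m'] e' → (∀ g ∈ 𝒮, ∀ᵐ ω ∂P, e' ω ≤ g ω) →
    ∀ᵐ ω ∂P, e' ω ≤ e ω

/-- The positive part of an extended-real number, as an element of `[0,∞]`. -/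
def erealPos (y : EReal) : ENNReal := if y = ⊤ then ⊤ else ENNReal.ofReal y.toReal

/-- A utility function: `U = -∞` on the negative half-line, real-valued, nondecreasing and
concave on the positive half-line (with real restriction `u`), and continuous from the
right at `0`. -/
structure UtilityFun where
  U : ℝ → EReal
  u : ℝ → ℝ
  neg_bot : ∀ y : ℝ, y < 0 → U y = ⊥
  pos_real : ∀ y : ℝ, 0 < y → U y = (u y : EReal)
  mono : MonotoneOn u (Set.Ioi (0:ℝ))
  concave : ConcaveOn ℝ (Set.Ioi (0:ℝ)) u
  zero_lim : Filter.Tendsto U (nhdsWithin 0 (Set.Ioi (0:ℝ))) (nhds (U 0))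

/-- Expected utility `E[U(X)] = E[U⁺(X)] - E[U⁻(X)]`, with the convention that it equals
`-∞` whenever `E[U⁻(X)] = ∞`. -/
def expUtility {Ω : Type*} [MeasurableSpace Ω] (P : Measure Ω) (Uf : UtilityFun)
    (X : Ω → ℝ) : EReal :=
  if (∫⁻ ω, erealPos (-(Uf.U (X ω))) ∂P) = ⊤ then ⊥
  else ((∫⁻ ω, erealPos (Uf.U (X ω)) ∂P : ENNReal) : EReal)
    - ((∫⁻ ω, erealPos (-(Uf.U (X ω))) ∂P : ENNReal) : EReal)

/-- The value function `u^α(x) = sup_{N ∈ 𝒜^α(x)} E[U(V^α(x,N))]` of the utility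
maximization problem with taxes. -/
def Market.valueFn (M : Market Ω T d) (Uf : UtilityFun) (α x : ℝ) : EReal :=
  ⨆ N ∈ {N : ℕ → ℕ → Ω → Fin d → ℝ |
      M.IsStrategy N ∧ ∀ᵐ ω ∂M.P, 0 ≤ M.V α x N ω},
    expUtility M.P Uf (fun ω => M.V α x N ω)

/-- The value function `u^0(x)` of the frictionless utility maximization problem. -/
def Market.valueFn0 (M : Market Ω T d) (Uf : UtilityFun) (x : ℝ) : EReal :=
  ⨆ N ∈ {N : ℕ → ℕ → Ω → Fin d → ℝ |
      M.IsStrategy N ∧ ∀ᵐ ω ∂M.P, 0 ≤ M.V0 x N ω},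
    expUtility M.P Uf (fun ω => M.V0 x N ω)

/-- The set `{V^α(x,N) : N ∈ 𝒜^α(x)} - L^0(F_T; ℝ₊)`. -/
def Market.VsetNonneg (M : Market Ω T d) (α x : ℝ) : Set (Ω → ℝ) :=
  {f | ∃ N, M.IsStrategy N ∧ (∀ᵐ ω ∂M.P, 0 ≤ M.V α x N ω) ∧
    ∃ g : Ω → ℝ, Measurable[M.F T] g ∧ (∀ ω, 0 ≤ g ω) ∧ f = fun ω => M.V α x N ω - g ω}

/-- The set `{V^0(x,N) : N ∈ 𝒩} - L^0(F_T; ℝ₊)` for the frictionless model. -/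
def Market.V0set (M : Market Ω T d) (x : ℝ) : Set (Ω → ℝ) :=
  {f | ∃ N, M.IsStrategy N ∧
    ∃ g : Ω → ℝ, Measurable[M.F T] g ∧ (∀ ω, 0 ≤ g ω) ∧ f = fun ω => M.V0 x N ω - g ω}

/-- A measurable (set-valued) random set: preimages of open sets are measurable. -/
def MeasRandomSet {Ω : Type*} (m : MeasurableSpace Ω) {d : ℕ}
    (K : Ω → Set (Fin d → ℝ)) : Prop :=
  ∀ O : Set (Fin d → ℝ), IsOpen O → MeasurableSet[m] {ω | (K ω ∩ O).Nonempty}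

/-- The random set `A_t = {β ∈ 𝒫_t : 1 + r_{t+1} + ⟨β, S_{t+1} - (1+r_{t+1})S_t⟩ ≥ 0 a.s.}`. -/
def Market.AtSet (M : Market Ω T d) (t : ℕ) : Set (Ω → Fin d → ℝ) :=
  {β | M.PurelyNonRev t β ∧
    ∀ᵐ ω ∂M.P, 0 ≤ 1 + M.r (t + 1) ω
      + dotp (β ω) (fun j => M.S (t + 1) ω j - (1 + M.r (t + 1) ω) * M.S t ω j)}

namespace VFF

variable {d : ℕ}

lemma dotp_sub_left (a b c : Fin d → ℝ) :
    dotp (fun j => a j - b j) c = dotp a c - dotp b c := by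
  simp [dotp, sub_mul, Finset.sum_sub_distrib]

lemma dotp_const_mul (k : ℝ) (a b : Fin d → ℝ) :
    dotp (fun j => k * a j) b = k * dotp a b := by
  simp [dotp, Finset.mul_sum, mul_assoc]

lemma dotp_sum_left {ι : Type*} (s : Finset ι) (f : ι → Fin d → ℝ) (b : Fin d → ℝ) :
    dotp (fun j => ∑ i ∈ s, f i j) b = ∑ i ∈ s, dotp (f i) b := by
  simp only [dotp, Finset.sum_mul]
  exact Finset.sum_comm

section Path

variable (α x : ℝ) (S : ℕ → Fin d → ℝ) (r : ℕ → ℝ) (N : ℕ → ℕ → Fin d → ℝ)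

lemma etaHist_succ (t s : ℕ) :
    etaHist α x S r N (t + 1) s =
      if s ≤ t then etaHist α x S r N t s
      else
        etaHist α x S r N t t + r (t + 1) * etaHist α x S r N t t
          + dotp
              (fun j => (∑ i ∈ Finset.range (t + 1), (N i t j - N i (t + 1) j))
                - N (t + 1) (t + 1) j)
              (fun j => S (t + 1) j)
          - (Piaux α S r N (etaHist α x S r N t) (t + 1)
              - Piaux α S r N (etaHist α x S r N t) t) := rfl

lemma etaHist_stable : ∀ t s, s ≤ t → etaHist α x S r N t s = etaHist α x S r N s s := by
  intro t
  induction t with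
  | zero => intro s hs; rw [Nat.le_zero.mp hs]
  | succ t ih =>
    intro s hs
    rcases Nat.lt_or_ge s (t + 1) with h | h
    · rw [etaHist_succ, if_pos (Nat.lt_succ_iff.mp h)]
      exact ih s (Nat.lt_succ_iff.mp h)
    · have : s = t + 1 := le_antisymm hs h
      rw [this]

/-- The bank account path `η_t`. -/
def etaD : ℕ → ℝ := fun t => etaHist α x S r N t t

lemma gaux_congr (e e' : ℕ → ℝ) (u : ℕ) (h : ∀ v, v < u → e v = e' v) :
    Gaux S r N e u = Gaux S r N e' u := by
  unfold Gaux
  refine Finset.sum_congr rfl (fun v hv => ?_)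
  rw [Finset.mem_Icc] at hv
  rw [h (v - 1) (by omega)]

lemma piaux_congr (e e' : ℕ → ℝ) (t : ℕ) (h : ∀ v, v < t → e v = e' v) :
    Piaux α S r N e t = Piaux α S r N e' t := by
  unfold Piaux
  congr 1
  refine Finset.sup'_congr _ rfl (fun u hu => ?_)
  rw [Finset.mem_range] at hu
  exact gaux_congr S r N e e' u (fun v hv => h v (by omega))

lemma etaD_zero : etaD α x S r N 0 = x - dotp (fun j => N 0 0 j) (fun j => S 0 j) := rfl

lemma etaD_succ (t : ℕ) :
    etaD α x S r N (t + 1) =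
      etaD α x S r N t + r (t + 1) * etaD α x S r N t
        + dotp
            (fun j => (∑ i ∈ Finset.range (t + 1), (N i t j - N i (t + 1) j))
              - N (t + 1) (t + 1) j)
            (fun j => S (t + 1) j)
        - (Piaux α S r N (etaD α x S r N) (t + 1) - Piaux α S r N (etaD α x S r N) t) := by
  show etaHist α x S r N (t+1) (t+1) = _
  rw [etaHist_succ, if_neg (by omega)]
  have h1 : Piaux α S r N (etaHist α x S r N t) (t + 1)
      = Piaux α S r N (etaD α x S r N) (t + 1) :=
    piaux_congr α S r N _ _ _ (fun v hv => etaHist_stable α x S r N t v (by omega))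
  have h2 : Piaux α S r N (etaHist α x S r N t) t
      = Piaux α S r N (etaD α x S r N) t :=
    piaux_congr α S r N _ _ _ (fun v hv => etaHist_stable α x S r N t v (by omega))
  rw [h1, h2]
  rfl

lemma gaux_zero (e : ℕ → ℝ) : Gaux S r N e 0 = 0 := by simp [Gaux]

lemma gaux_succ (e : ℕ → ℝ) (u : ℕ) :
    Gaux S r N e (u + 1) = Gaux S r N e u +
      (e u * r (u + 1) +
        ∑ i ∈ Finset.range (u + 1),
          dotp (fun j => N i u j - N i (u + 1) j) (fun j => S (u + 1) j - S i j)) := by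
  unfold Gaux
  rw [Finset.sum_Icc_succ_top (by omega)]
  simp

lemma sup'_range_succ (f : ℕ → ℝ) (t : ℕ) :
    (Finset.range (t+2)).sup' Finset.nonempty_range_add_one f
      = max ((Finset.range (t+1)).sup' Finset.nonempty_range_add_one f) (f (t+1)) := by
  apply le_antisymm
  · refine Finset.sup'_le _ _ (fun u hu => ?_)
    rw [Finset.mem_range] at hu
    rcases Nat.lt_or_ge u (t+1) with h | h
    · exact le_max_of_le_left (Finset.le_sup' f (Finset.mem_range.mpr h))
    · have : u = t + 1 := by omega
      rw [this]; exact le_max_right _ _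
  · refine max_le ?_ ?_
    · exact Finset.sup'_mono f (Finset.range_subset_range.mpr (by omega))
        Finset.nonempty_range_add_one
    · exact Finset.le_sup' f (Finset.mem_range.mpr (by omega))

lemma piaux_succ (e : ℕ → ℝ) (t : ℕ) :
    Piaux α S r N e (t + 1) = α * max ((Finset.range (t+1)).sup' Finset.nonempty_range_add_one
        (fun u => Gaux S r N e u)) (Gaux S r N e (t+1)) := by
  unfold Piaux
  rw [sup'_range_succ]

lemma piaux_mono (e : ℕ → ℝ) (t : ℕ) (hα : 0 ≤ α) :
    Piaux α S r N e t ≤ Piaux α S r N e (t + 1) := by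
  rw [piaux_succ]
  unfold Piaux
  exact mul_le_mul_of_nonneg_left (le_max_left _ _) hα

lemma piaux_nonneg (e : ℕ → ℝ) (t : ℕ) (hα : 0 ≤ α) : 0 ≤ Piaux α S r N e t := by
  unfold Piaux
  refine mul_nonneg hα ?_
  refine le_trans ?_ (Finset.le_sup' (fun u => Gaux S r N e u)
    (Finset.mem_range.mpr (Nat.succ_pos t)))
  simp [gaux_zero]

end Path

section Wealth0

variable (x : ℝ) (S : ℕ → Fin d → ℝ) (r : ℕ → ℝ) (N : ℕ → ℕ → Fin d → ℝ)

lemma wealth0_zero : wealth0 S r N x 0 = x := rfl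

lemma wealth0_succ (t : ℕ) :
    wealth0 S r N x (t + 1) =
      (1 + r (t + 1)) * wealth0 S r N x t
        + dotp (fun j => ∑ i ∈ Finset.range (t + 1), N i t j)
            (fun j => S (t + 1) j - (1 + r (t + 1)) * S t j) := rfl

/-- compounding factor -/
def Bf (r : ℕ → ℝ) : ℕ → ℝ
  | 0 => 1
  | t + 1 => (1 + r (t + 1)) * Bf r t

lemma Bf_ge_one (hr : ∀ t, 0 ≤ r t) : ∀ t, 1 ≤ Bf r t := by
  intro t
  induction t with
  | zero => simp [Bf]
  | succ t ih =>
    have h := hr (t + 1)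
    calc (1:ℝ) ≤ 1 * 1 := by norm_num
    _ ≤ (1 + r (t + 1)) * Bf r t := by
      apply mul_le_mul (by linarith) ih (by norm_num) (by linarith)

lemma wealth0_scale (κ x' : ℝ) (t : ℕ) :
    wealth0 S r (fun i t j => κ * N i t j) x' t
      = κ * wealth0 S r N x t + (x' - κ * x) * Bf r t := by
  induction t with
  | zero => simp [wealth0_zero, Bf]
  | succ t ih =>
    rw [wealth0_succ, wealth0_succ, ih]
    have : dotp (fun j => ∑ i ∈ Finset.range (t + 1), κ * N i t j)
        (fun j => S (t + 1) j - (1 + r (t + 1)) * S t j)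
        = κ * dotp (fun j => ∑ i ∈ Finset.range (t + 1), N i t j)
            (fun j => S (t + 1) j - (1 + r (t + 1)) * S t j) := by
      rw [← dotp_const_mul]
      congr 1
      funext j
      rw [Finset.mul_sum]
    rw [this, Bf]
    ring

end Wealth0

end VFF

namespace VFF

variable {d : ℕ}

lemma dotp_sub_right (a b c : Fin d → ℝ) :
    dotp a (fun j => b j - c j) = dotp a b - dotp a c := by
  simp [dotp, mul_sub, Finset.sum_sub_distrib]

lemma dotp_mul_right (a : Fin d → ℝ) (k : ℝ) (b : Fin d → ℝ) :
    dotp a (fun j => k * b j) = k * dotp a b := by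
  simp only [dotp, Finset.mul_sum]
  congr 1; funext j; ring

section L34

variable (α x : ℝ) (S : ℕ → Fin d → ℝ) (r : ℕ → ℝ) (N : ℕ → ℕ → Fin d → ℝ)

/-- total holdings -/
def Hsum (N : ℕ → ℕ → Fin d → ℝ) : ℕ → Fin d → ℝ := fun t j => ∑ i ∈ Finset.range (t+1), N i t j

lemma trade_term_eq (t : ℕ) :
    dotp (fun j => (∑ i ∈ Finset.range (t + 1), (N i t j - N i (t + 1) j))
          - N (t + 1) (t + 1) j) (fun j => S (t + 1) j)
      = dotp (Hsum N t) (fun j => S (t+1) j) - dotp (Hsum N (t+1)) (fun j => S (t+1) j) := by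
  rw [← dotp_sub_left]
  congr 1
  funext j
  simp only [Hsum]
  have h2 : ∑ i ∈ Finset.range (t+1+1), N i (t+1) j
      = ∑ i ∈ Finset.range (t+1), N i (t+1) j + N (t+1) (t+1) j :=
    Finset.sum_range_succ _ _
  rw [Finset.sum_sub_distrib, h2]
  ring

lemma liq_le_wealth0 (hr : ∀ t, 0 ≤ r t) (hα : 0 ≤ α) :
    ∀ t, etaD α x S r N t + dotp (Hsum N t) (fun j => S t j) ≤ wealth0 S r N x t := by
  intro t
  induction t with
  | zero =>
    have : Hsum N 0 = fun j => N 0 0 j := by funext j; simp [Hsum]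
    rw [this, etaD_zero, wealth0_zero]
    simp
  | succ t ih =>
    rw [etaD_succ, wealth0_succ, trade_term_eq]
    have hPi : Piaux α S r N (etaD α x S r N) t
        ≤ Piaux α S r N (etaD α x S r N) (t+1) := piaux_mono α S r N _ t hα
    have hdot : dotp (fun j => ∑ i ∈ Finset.range (t + 1), N i t j)
        (fun j => S (t + 1) j - (1 + r (t + 1)) * S t j)
        = dotp (Hsum N t) (fun j => S (t+1) j)
          - (1 + r (t+1)) * dotp (Hsum N t) (fun j => S t j) := by
      have : (fun j => S (t + 1) j - (1 + r (t + 1)) * S t j)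
          = fun j => S (t+1) j - ((fun j => (1 + r (t+1)) * S t j) j) := rfl
      rw [this, dotp_sub_right, dotp_mul_right]
      rfl
    rw [hdot]
    have h1r : (0:ℝ) ≤ 1 + r (t+1) := by have := hr (t+1); linarith
    nlinarith [mul_le_mul_of_nonneg_left ih h1r]

lemma etaT_le_wealth0 (T : ℕ) (hr : ∀ t, 0 ≤ r t) (hα : 0 ≤ α)
    (hNT : ∀ i j, N i T j = 0) :
    etaHist α x S r N T T ≤ wealth0 S r N x T := by
  have h := liq_le_wealth0 α x S r N hr hα T
  have : Hsum N T = fun j => 0 := by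
    funext j; simp [Hsum, hNT]
  rw [this] at h
  simpa [etaD, dotp] using h

end L34

end VFF

namespace VFF

/-- state of the full-wash construction: scale `mu`, realized gains `G`,
running maximum `Gam`, bank account `eta`. -/
structure FWs where
  mu : ℝ
  G : ℝ
  Gam : ℝ
  eta : ℝ

section FW

variable {d : ℕ} (β x : ℝ) (S : ℕ → Fin d → ℝ) (r : ℕ → ℝ) (H : ℕ → Fin d → ℝ)

/-- The full-wash scaled strategy state recursion. -/
def FW : ℕ → FWs
  | 0 => ⟨1, 0, 0, x - dotp (fun j => H 0 j) (fun j => S 0 j)⟩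
  | t + 1 =>
    let p := FW t
    let G' := p.G + p.eta * r (t+1)
      + p.mu * (dotp (fun j => H t j) (fun j => S (t+1) j)
          - dotp (fun j => H t j) (fun j => S t j))
    let Γ' := max p.Gam G'
    let μ' := if p.Gam < G' then (1 - β) * p.mu else p.mu
    let η' := p.eta + r (t+1) * p.eta
      + (p.mu * dotp (fun j => H t j) (fun j => S (t+1) j)
          - μ' * dotp (fun j => H (t+1) j) (fun j => S (t+1) j))
      - (β * Γ' - β * p.Gam)
    ⟨μ', G', Γ', η'⟩

/-- The full-wash strategy built from holdings `H` and the scales `mu`. -/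
def FWstrat : ℕ → ℕ → Fin d → ℝ :=
  fun i t j => if i = t then (FW β x S r H t).mu * H t j else 0

lemma FW_succ (t : ℕ) :
    FW β x S r H (t+1) =
      let p := FW β x S r H t
      let G' := p.G + p.eta * r (t+1)
        + p.mu * (dotp (fun j => H t j) (fun j => S (t+1) j)
            - dotp (fun j => H t j) (fun j => S t j))
      let Γ' := max p.Gam G'
      let μ' := if p.Gam < G' then (1 - β) * p.mu else p.mu
      let η' := p.eta + r (t+1) * p.eta
        + (p.mu * dotp (fun j => H t j) (fun j => S (t+1) j)
            - μ' * dotp (fun j => H (t+1) j) (fun j => S (t+1) j))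
        - (β * Γ' - β * p.Gam)
      ⟨μ', G', Γ', η'⟩ := rfl

lemma FW_G_succ (t : ℕ) :
    (FW β x S r H (t+1)).G = (FW β x S r H t).G + (FW β x S r H t).eta * r (t+1)
      + (FW β x S r H t).mu * (dotp (fun j => H t j) (fun j => S (t+1) j)
          - dotp (fun j => H t j) (fun j => S t j)) := rfl

lemma FW_Gam_succ (t : ℕ) :
    (FW β x S r H (t+1)).Gam = max (FW β x S r H t).Gam (FW β x S r H (t+1)).G := rfl

lemma FW_mu_succ (t : ℕ) :
    (FW β x S r H (t+1)).mu =
      if (FW β x S r H t).Gam < (FW β x S r H (t+1)).G then (1 - β) * (FW β x S r H t).mu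
      else (FW β x S r H t).mu := rfl

lemma FW_eta_succ (t : ℕ) :
    (FW β x S r H (t+1)).eta = (FW β x S r H t).eta + r (t+1) * (FW β x S r H t).eta
      + ((FW β x S r H t).mu * dotp (fun j => H t j) (fun j => S (t+1) j)
          - (FW β x S r H (t+1)).mu * dotp (fun j => H (t+1) j) (fun j => S (t+1) j))
      - (β * (FW β x S r H (t+1)).Gam - β * (FW β x S r H t).Gam) := rfl

lemma FWstrat_sum_sales (u : ℕ) :
    ∑ i ∈ Finset.range (u + 1),
        dotp (fun j => FWstrat β x S r H i u j - FWstrat β x S r H i (u+1) j)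
          (fun j => S (u+1) j - S i j)
      = (FW β x S r H u).mu * (dotp (fun j => H u j) (fun j => S (u+1) j)
          - dotp (fun j => H u j) (fun j => S u j)) := by
  rw [Finset.sum_eq_single_of_mem u (Finset.self_mem_range_succ u)]
  · have h1 : ∀ j, FWstrat β x S r H u (u+1) j = 0 := by
      intro j; simp [FWstrat]
    have h2 : ∀ j, FWstrat β x S r H u u j = (FW β x S r H u).mu * H u j := by
      intro j; simp [FWstrat]
    simp only [h1, h2, sub_zero]
    have : dotp (fun j => (FW β x S r H u).mu * H u j) (fun j => S (u+1) j - S u j)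
        = (FW β x S r H u).mu * dotp (fun j => H u j) (fun j => S (u+1) j - S u j) :=
      dotp_const_mul _ _ _
    rw [this, dotp_sub_right]
  · intro i hi hne
    have h1 : ∀ j, FWstrat β x S r H i u j = 0 := by
      intro j; simp [FWstrat, hne]
    have h2 : ∀ j, FWstrat β x S r H i (u+1) j = 0 := by
      intro j
      have : i ≠ u + 1 := by rw [Finset.mem_range] at hi; omega
      simp [FWstrat, this]
    simp [h1, h2, dotp]

lemma FW_G_corr (e : ℕ → ℝ) :
    ∀ u, (∀ v, v < u → e v = (FW β x S r H v).eta) →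
      Gaux S r (FWstrat β x S r H) e u = (FW β x S r H u).G := by
  intro u
  induction u with
  | zero => intro _; rw [gaux_zero]; rfl
  | succ u ih =>
    intro h
    rw [gaux_succ, ih (fun v hv => h v (by omega)), FWstrat_sum_sales,
      h u (by omega), FW_G_succ]
    ring

lemma FW_Gam_corr (e : ℕ → ℝ) :
    ∀ t, (∀ v, v < t → e v = (FW β x S r H v).eta) →
      (Finset.range (t+1)).sup' Finset.nonempty_range_add_one
          (fun u => Gaux S r (FWstrat β x S r H) e u)
        = (FW β x S r H t).Gam := by
  intro t
  induction t with
  | zero =>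
    intro _
    have h0 : (Finset.range (0+1)).sup' Finset.nonempty_range_add_one
        (fun u => Gaux S r (FWstrat β x S r H) e u)
        = Gaux S r (FWstrat β x S r H) e 0 := by
      apply le_antisymm
      · refine Finset.sup'_le _ _ (fun u hu => ?_)
        rw [Finset.mem_range] at hu
        have : u = 0 := by omega
        rw [this]
      · exact Finset.le_sup' _ (Finset.mem_range.mpr (by omega))
    rw [h0, gaux_zero]
    rfl
  | succ t ih =>
    intro h
    rw [sup'_range_succ, ih (fun v hv => h v (by omega)),
      FW_G_corr β x S r H e (t+1) h, FW_Gam_succ]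

lemma FW_eta_corr : ∀ t, etaD β x S r (FWstrat β x S r H) t = (FW β x S r H t).eta := by
  intro t
  induction t using Nat.strong_induction_on with
  | _ t ih =>
    match t with
    | 0 =>
      rw [etaD_zero]
      have : ∀ j, FWstrat β x S r H 0 0 j = H 0 j := by
        intro j; simp [FWstrat, FW]
      simp only [this]
      rfl
    | t + 1 =>
      rw [etaD_succ]
      have hepre : ∀ v, v < t + 1 → etaD β x S r (FWstrat β x S r H) v
          = (FW β x S r H v).eta := fun v hv => ih v (by omega)
      -- taxes
      have hPi1 : Piaux β S r (FWstrat β x S r H) (etaD β x S r (FWstrat β x S r H)) (t+1)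
          = β * (FW β x S r H (t+1)).Gam := by
        unfold Piaux
        rw [FW_Gam_corr β x S r H _ (t+1) (fun v hv => hepre v hv)]
      have hPi0 : Piaux β S r (FWstrat β x S r H) (etaD β x S r (FWstrat β x S r H)) t
          = β * (FW β x S r H t).Gam := by
        unfold Piaux
        rw [FW_Gam_corr β x S r H _ t (fun v hv => hepre v (by omega))]
      -- trade term
      have hsum1 : ∀ j, (∑ i ∈ Finset.range (t + 1),
            (FWstrat β x S r H i t j - FWstrat β x S r H i (t + 1) j))
          = (FW β x S r H t).mu * H t j := by
        intro j
        rw [Finset.sum_eq_single_of_mem t (Finset.self_mem_range_succ t)]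
        · simp [FWstrat]
        · intro i hi hne
          have : i ≠ t + 1 := by rw [Finset.mem_range] at hi; omega
          simp [FWstrat, hne, this]
      have htrade : dotp
            (fun j => (∑ i ∈ Finset.range (t + 1),
                (FWstrat β x S r H i t j - FWstrat β x S r H i (t + 1) j))
              - FWstrat β x S r H (t+1) (t+1) j)
            (fun j => S (t + 1) j)
          = (FW β x S r H t).mu * dotp (fun j => H t j) (fun j => S (t+1) j)
            - (FW β x S r H (t+1)).mu * dotp (fun j => H (t+1) j) (fun j => S (t+1) j) := by
        have hstr : ∀ j, FWstrat β x S r H (t+1) (t+1) j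
            = (FW β x S r H (t+1)).mu * H (t+1) j := by
          intro j; simp [FWstrat]
        simp only [hsum1, hstr]
        rw [show (fun j => (FW β x S r H t).mu * H t j
              - (FW β x S r H (t+1)).mu * H (t+1) j)
            = (fun j => ((fun j => (FW β x S r H t).mu * H t j) j)
              - ((fun j => (FW β x S r H (t+1)).mu * H (t+1) j) j)) from rfl,
          dotp_sub_left, dotp_const_mul, dotp_const_mul]
      rw [hPi1, hPi0, htrade, ih t (by omega), FW_eta_succ]

/-- frictionless wealth for holdings `H`. -/
def Xf : ℕ → ℝ
  | 0 => x
  | t + 1 => (1 + r (t+1)) * Xf t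
      + (dotp (fun j => H t j) (fun j => S (t+1) j)
        - (1 + r (t+1)) * dotp (fun j => H t j) (fun j => S t j))

/-- liquidation value of the full-wash strategy. -/
def Lf (t : ℕ) : ℝ :=
  (FW β x S r H t).eta + (FW β x S r H t).mu * dotp (fun j => H t j) (fun j => S t j)

lemma FW_mu_nonneg (hβ1 : β ≤ 1) : ∀ t, 0 ≤ (FW β x S r H t).mu := by
  intro t
  induction t with
  | zero => norm_num [FW]
  | succ t ih =>
    rw [FW_mu_succ]
    split
    · exact mul_nonneg (by linarith) ih
    · exact ih

lemma step_core (β x r' a c μ G Γ η Xt : ℝ)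
    (hr0' : 0 ≤ r') (hβ0 : 0 ≤ β) (hβ1 : β < 1) (hx : 0 < x)
    (hΓ0 : 0 ≤ Γ) (hGΓ : G ≤ Γ) (hμu : μ ≤ 1) (hμpos : 0 < μ)
    (hIDG : G = (η + μ*c) - x + β*Γ)
    (hM : x + μ*(Xt - x) ≤ η + μ*c)
    (G1 Γ1 μ1 X1 L1 : ℝ)
    (hG1 : G1 = G + η*r' + μ*(a-c))
    (hΓ1 : Γ1 = max Γ G1)
    (hμ1 : μ1 = if Γ < G1 then (1-β)*μ else μ)
    (hX1 : X1 = (1+r')*Xt + (a - (1+r')*c))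
    (hL1 : L1 = η + r'*η + μ*a - (β*Γ1 - β*Γ)) :
    0 ≤ Γ1 ∧ G1 ≤ Γ1 ∧ (1-β)*μ ≤ μ1 ∧ μ1 ≤ μ ∧
      G1 = L1 - x + β*Γ1 ∧ x + μ1*(X1 - x) ≤ L1 := by
  have hD0 : 0 ≤ (η + μ*c) - μ * Xt := by nlinarith
  have hrD : 0 ≤ r' * ((η + μ*c) - μ * Xt) := mul_nonneg hr0' hD0
  refine ⟨?_, ?_, ?_, ?_, ?_, ?_⟩
  · rw [hΓ1]; exact le_trans hΓ0 (le_max_left _ _)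
  · rw [hΓ1]; exact le_max_right _ _
  · rw [hμ1]; split
    · exact le_refl _
    · nlinarith
  · rw [hμ1]; split
    · nlinarith
    · exact le_refl _
  · rw [hG1, hL1]; linarith [hIDG]
  · rcases lt_or_ge Γ G1 with hc | hc
    · have hΓeq : Γ1 = G1 := by rw [hΓ1]; exact max_eq_right (le_of_lt hc)
      have hμeq : μ1 = (1-β)*μ := by rw [hμ1, if_pos hc]
      have hLx : L1 - x = (1-β) * G1 := by
        rw [hL1, hΓeq, hG1]; linarith [hIDG]
      have hGge : μ * (X1 - x) ≤ G1 := by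
        rw [hG1, hX1]; nlinarith
      have h2 := mul_le_mul_of_nonneg_left hGge (show (0:ℝ) ≤ 1 - β by linarith)
      rw [hμeq]
      nlinarith [hLx, h2]
    · have hΓeq : Γ1 = Γ := by rw [hΓ1]; exact max_eq_left hc
      have hμeq : μ1 = μ := by rw [hμ1, if_neg (not_lt.mpr hc)]
      rw [hμeq, hL1, hΓeq, hX1]
      nlinarith [hM, hrD]

lemma FW_inv (hr : ∀ t, 0 ≤ r t) (hβ0 : 0 ≤ β) (hβ1 : β < 1) (hx : 0 < x) : ∀ t,
    0 ≤ (FW β x S r H t).Gam ∧ (FW β x S r H t).G ≤ (FW β x S r H t).Gam ∧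
    (1-β)^t ≤ (FW β x S r H t).mu ∧ (FW β x S r H t).mu ≤ 1 ∧
    (FW β x S r H t).G = Lf β x S r H t - x + β * (FW β x S r H t).Gam ∧
    x + (FW β x S r H t).mu * (Xf x S r H t - x) ≤ Lf β x S r H t := by
  intro t
  induction t with
  | zero =>
    have hL : Lf β x S r H 0 = x := by simp [Lf, FW]
    refine ⟨le_refl 0, le_refl 0, by simp [FW], by simp [FW], ?_, ?_⟩
    · simp [FW, hL]
    · simp [FW, hL, Xf]
  | succ t ih =>
    obtain ⟨hΓ0, hGΓ, hμl, hμu, hIDG, hM⟩ := ih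
    have hμpos : 0 < (FW β x S r H t).mu :=
      lt_of_lt_of_le (pow_pos (by linarith) t) hμl
    have hLft : Lf β x S r H t = (FW β x S r H t).eta
        + (FW β x S r H t).mu * dotp (fun j => H t j) (fun j => S t j) := rfl
    rw [hLft] at hIDG hM
    have eL : Lf β x S r H (t+1)
        = (FW β x S r H t).eta + r (t+1) * (FW β x S r H t).eta
          + (FW β x S r H t).mu * dotp (fun j => H t j) (fun j => S (t+1) j)
          - (β * (FW β x S r H (t+1)).Gam - β * (FW β x S r H t).Gam) := by
      show (FW β x S r H (t+1)).eta
          + (FW β x S r H (t+1)).mu * dotp (fun j => H (t+1) j) (fun j => S (t+1) j) = _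
      rw [FW_eta_succ]
      ring
    obtain ⟨k1, k2, k3, k4, k5, k6⟩ := step_core β x (r (t+1))
      (dotp (fun j => H t j) (fun j => S (t+1) j))
      (dotp (fun j => H t j) (fun j => S t j))
      (FW β x S r H t).mu (FW β x S r H t).G (FW β x S r H t).Gam
      (FW β x S r H t).eta (Xf x S r H t)
      (hr (t+1)) hβ0 hβ1 hx hΓ0 hGΓ hμu hμpos hIDG hM
      (FW β x S r H (t+1)).G (FW β x S r H (t+1)).Gam (FW β x S r H (t+1)).mu
      (Xf x S r H (t+1)) (Lf β x S r H (t+1))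
      (FW_G_succ β x S r H t)
      (FW_Gam_succ β x S r H t)
      (by rw [FW_mu_succ, FW_G_succ])
      (rfl)
      (eL)
    refine ⟨k1, k2, ?_, le_trans k4 hμu, k5, k6⟩
    calc (1-β)^(t+1) = (1-β) * (1-β)^t := by rw [pow_succ]; ring
    _ ≤ (1-β) * (FW β x S r H t).mu := by
        apply mul_le_mul_of_nonneg_left hμl (by linarith)
    _ ≤ (FW β x S r H (t+1)).mu := k3

lemma FW_main (T : ℕ) (hr : ∀ t, 0 ≤ r t) (hβ0 : 0 ≤ β) (hβ1 : β < 1) (hx : 0 < x)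
    (hHT : ∀ j, H T j = 0) :
    ∃ μ : ℝ, (1-β)^T ≤ μ ∧ μ ≤ 1 ∧
      x + μ * (Xf x S r H T - x) ≤ etaHist β x S r (FWstrat β x S r H) T T := by
  obtain ⟨_, _, hμl, hμu, _, hM⟩ := FW_inv β x S r H hr hβ0 hβ1 hx T
  refine ⟨(FW β x S r H T).mu, hμl, hμu, ?_⟩
  have hcorr : etaHist β x S r (FWstrat β x S r H) T T = (FW β x S r H T).eta :=
    FW_eta_corr β x S r H T
  have hdz : dotp (fun j => H T j) (fun j => S T j) = 0 := by
    simp [dotp, hHT]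
  have hLT : Lf β x S r H T = (FW β x S r H T).eta := by
    rw [Lf, hdz]; ring
  rw [hcorr, ← hLT]
  exact hM

end FW

end VFF

namespace VFF

section LinkX

variable {d : ℕ} (x : ℝ) (S : ℕ → Fin d → ℝ) (r : ℕ → ℝ) (P : ℕ → ℕ → Fin d → ℝ)

lemma wealth0_eq_Xf : ∀ t, wealth0 S r P x t
    = Xf x S r (fun u j => ∑ i ∈ Finset.range (u+1), P i u j) t := by
  intro t
  induction t with
  | zero => rfl
  | succ t ih =>
    rw [wealth0_succ, ih]
    show _ = (1 + r (t+1)) * Xf x S r _ t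
      + (dotp (fun j => ∑ i ∈ Finset.range (t+1), P i t j) (fun j => S (t+1) j)
        - (1 + r (t+1)) * dotp (fun j => ∑ i ∈ Finset.range (t+1), P i t j) (fun j => S t j))
    have hdot : dotp (fun j => ∑ i ∈ Finset.range (t + 1), P i t j)
        (fun j => S (t + 1) j - (1 + r (t + 1)) * S t j)
        = dotp (fun j => ∑ i ∈ Finset.range (t+1), P i t j) (fun j => S (t+1) j)
          - (1 + r (t+1)) * dotp (fun j => ∑ i ∈ Finset.range (t+1), P i t j)
              (fun j => S t j) := by
      rw [show (fun j => S (t + 1) j - (1 + r (t + 1)) * S t j)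
          = fun j => S (t+1) j - ((fun j => (1 + r (t+1)) * S t j) j) from rfl,
        dotp_sub_right, dotp_mul_right]
    rw [hdot]

end LinkX

section OmegaLevel

variable {Ω : Type*} [m0 : MeasurableSpace Ω] {T d : ℕ} (M : Market Ω T d)
variable (β x : ℝ) (H : ℕ → Ω → Fin d → ℝ)

/-- pathwise full-wash state -/
def FWo (t : ℕ) (ω : Ω) : FWs :=
  FW β x (fun u => M.S u ω) (fun u => M.r u ω) (fun u => H u ω) t

/-- pathwise full-wash strategy -/
def FWso : ℕ → ℕ → Ω → Fin d → ℝ :=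
  fun i t ω j => if i = t then (FWo M β x H t ω).mu * H t ω j else 0

lemma FWso_eq (i t : ℕ) (ω : Ω) : (fun j => FWso M β x H i t ω j)
    = (fun j => FWstrat β x (fun u => M.S u ω) (fun u => M.r u ω) (fun u => H u ω) i t j) := rfl

lemma dot_meas {v t u : ℕ} (ht : t ≤ v) (hu : u ≤ v)
    (hH : ∀ s, Measurable[M.F s] (H s)) :
    Measurable[M.F v] (fun ω => dotp (fun j => H t ω j) (fun j => M.S u ω j)) := by
  apply Finset.measurable_sum
  intro j _
  exact (((measurable_pi_apply j).comp (hH t)).mono (M.F_mono ht) le_rfl).mul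
    (((measurable_pi_apply j).comp (M.S_adapted u)).mono (M.F_mono hu) le_rfl)

lemma FWo_meas (hH : ∀ s, Measurable[M.F s] (H s)) :
    ∀ t, Measurable[M.F t] (fun ω => (FWo M β x H t ω).mu)
      ∧ Measurable[M.F t] (fun ω => (FWo M β x H t ω).G)
      ∧ Measurable[M.F t] (fun ω => (FWo M β x H t ω).Gam)
      ∧ Measurable[M.F t] (fun ω => (FWo M β x H t ω).eta) := by
  intro t
  induction t with
  | zero =>
    refine ⟨measurable_const, measurable_const, measurable_const, ?_⟩
    have : (fun ω => (FWo M β x H 0 ω).eta)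
        = fun ω => x - dotp (fun j => H 0 ω j) (fun j => M.S 0 ω j) := rfl
    rw [this]
    exact measurable_const.sub (dot_meas M H (le_refl 0) (le_refl 0) hH)
  | succ t ih =>
    obtain ⟨hμ, hG, hΓ, hη⟩ := ih
    have hle : M.F t ≤ M.F (t+1) := M.F_mono (Nat.le_succ t)
    have hμ' := hμ.mono hle le_rfl
    have hG' := hG.mono hle le_rfl
    have hΓ' := hΓ.mono hle le_rfl
    have hη' := hη.mono hle le_rfl
    have hrm : Measurable[M.F (t+1)] (fun ω => M.r (t+1) ω) := M.r_adapted (t+1)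
    have hd1 : Measurable[M.F (t+1)]
        (fun ω => dotp (fun j => H t ω j) (fun j => M.S (t+1) ω j)) :=
      dot_meas M H (Nat.le_succ t) le_rfl hH
    have hd0 : Measurable[M.F (t+1)]
        (fun ω => dotp (fun j => H t ω j) (fun j => M.S t ω j)) :=
      dot_meas M H (Nat.le_succ t) (Nat.le_succ t) hH
    have hd2 : Measurable[M.F (t+1)]
        (fun ω => dotp (fun j => H (t+1) ω j) (fun j => M.S (t+1) ω j)) :=
      dot_meas M H le_rfl le_rfl hH
    have hGs : Measurable[M.F (t+1)] (fun ω => (FWo M β x H (t+1) ω).G) := by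
      have : (fun ω => (FWo M β x H (t+1) ω).G)
          = fun ω => (FWo M β x H t ω).G + (FWo M β x H t ω).eta * M.r (t+1) ω
            + (FWo M β x H t ω).mu
              * (dotp (fun j => H t ω j) (fun j => M.S (t+1) ω j)
                - dotp (fun j => H t ω j) (fun j => M.S t ω j)) := by
        funext ω
        exact FW_G_succ β x _ _ _ t
      rw [this]
      exact (hG'.add (hη'.mul hrm)).add (hμ'.mul (hd1.sub hd0))
    have hΓs : Measurable[M.F (t+1)] (fun ω => (FWo M β x H (t+1) ω).Gam) := by
      have : (fun ω => (FWo M β x H (t+1) ω).Gam)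
          = fun ω => max (FWo M β x H t ω).Gam (FWo M β x H (t+1) ω).G := by
        funext ω
        exact FW_Gam_succ β x _ _ _ t
      rw [this]
      exact hΓ'.max hGs
    have hcond : MeasurableSet[M.F (t+1)]
        {ω | (FWo M β x H t ω).Gam < (FWo M β x H (t+1) ω).G} :=
      measurableSet_lt hΓ' hGs
    have hμs : Measurable[M.F (t+1)] (fun ω => (FWo M β x H (t+1) ω).mu) := by
      have : (fun ω => (FWo M β x H (t+1) ω).mu)
          = fun ω => if (FWo M β x H t ω).Gam < (FWo M β x H (t+1) ω).G
              then (1-β) * (FWo M β x H t ω).mu else (FWo M β x H t ω).mu := by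
        funext ω
        exact FW_mu_succ β x _ _ _ t
      rw [this]
      exact Measurable.ite hcond (measurable_const.mul hμ') hμ'
    have hηs : Measurable[M.F (t+1)] (fun ω => (FWo M β x H (t+1) ω).eta) := by
      have : (fun ω => (FWo M β x H (t+1) ω).eta)
          = fun ω => (FWo M β x H t ω).eta + M.r (t+1) ω * (FWo M β x H t ω).eta
            + ((FWo M β x H t ω).mu * dotp (fun j => H t ω j) (fun j => M.S (t+1) ω j)
              - (FWo M β x H (t+1) ω).mu
                * dotp (fun j => H (t+1) ω j) (fun j => M.S (t+1) ω j))
            - (β * (FWo M β x H (t+1) ω).Gam - β * (FWo M β x H t ω).Gam) := by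
        funext ω
        exact FW_eta_succ β x _ _ _ t
      rw [this]
      exact ((hη'.add (hrm.mul hη')).add
        ((hμ'.mul hd1).sub (hμs.mul hd2))).sub
        ((measurable_const.mul hΓs).sub (measurable_const.mul hΓ'))
    exact ⟨hμs, hGs, hΓs, hηs⟩

/-- the full-wash strategy is a trading strategy -/
lemma FWso_isStrategy (hβ0 : 0 ≤ β) (hβ1 : β < 1)
    (hH : ∀ s, Measurable[M.F s] (H s))
    (hHnn : ∀ s ω j, 0 ≤ H s ω j)
    (hHT : ∀ ω j, H T ω j = 0) :
    M.IsStrategy (FWso M β x H) := by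
  refine ⟨?_, ?_, ?_, ?_, ?_⟩
  · intro i t
    refine @measurable_pi_lambda Ω (Fin d) (fun _ => ℝ) (M.F t) (fun _ => inferInstance)
      _ (fun j => ?_)
    by_cases h : i = t
    · subst h
      have : (fun ω => FWso M β x H i i ω j)
          = fun ω => (FWo M β x H i ω).mu * H i ω j := by
        funext ω; simp [FWso]
      rw [this]
      exact ((FWo_meas M β x H hH i).1).mul ((measurable_pi_apply j).comp (hH i))
    · have : (fun ω => FWso M β x H i t ω j) = fun _ => 0 := by
        funext ω; simp [FWso, h]
      rw [this]
      exact measurable_const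
  · intro i t ω j
    unfold FWso
    split
    · exact mul_nonneg (FW_mu_nonneg β x _ _ _ (le_of_lt hβ1) _) (hHnn t ω j)
    · exact le_refl 0
  · intro i t hit htT ω j
    have h1 : FWso M β x H i (t+1) ω j = 0 := by
      have : i ≠ t + 1 := by omega
      simp [FWso, this]
    rw [h1]
    unfold FWso
    split
    · exact mul_nonneg (FW_mu_nonneg β x _ _ _ (le_of_lt hβ1) _) (hHnn t ω j)
    · exact le_refl 0
  · intro i ω j
    unfold FWso
    split
    · rename_i h
      subst h
      rw [hHT ω j, mul_zero]
    · rfl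
  · intro i t hti ω j
    have : i ≠ t := by omega
    simp [FWso, this]

/-- the wealth bound for the full-wash strategy -/
lemma FWso_wealth (hr : ∀ t ω, 0 ≤ M.r t ω) (hβ0 : 0 ≤ β) (hβ1 : β < 1) (hx : 0 < x)
    (hHT : ∀ ω j, H T ω j = 0) (ω : Ω) :
    ∃ μ : ℝ, (1-β)^T ≤ μ ∧ μ ≤ 1 ∧
      x + μ * (Xf x (fun u => M.S u ω) (fun u => M.r u ω) (fun u => H u ω) T - x)
        ≤ M.V β x (FWso M β x H) ω := by
  have h := FW_main β x (fun u => M.S u ω) (fun u => M.r u ω) (fun u => H u ω) T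
    (fun t => hr t ω) hβ0 hβ1 hx (fun j => hHT ω j)
  obtain ⟨μ, h1, h2, h3⟩ := h
  exact ⟨μ, h1, h2, h3⟩

end OmegaLevel

end VFF

namespace VFF

lemma erealPos_coe (c : ℝ) : erealPos ((c : ℝ) : EReal) = ENNReal.ofReal c := by
  unfold erealPos
  rw [if_neg (EReal.coe_ne_top c), EReal.toReal_coe]

lemma erealPos_le_ofReal {y : EReal} {c : ℝ} (h : y ≤ (c : EReal)) :
    erealPos y ≤ ENNReal.ofReal c := by
  unfold erealPos
  rcases eq_or_ne y ⊤ with hy | hy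
  · exfalso
    rw [hy] at h
    exact absurd h (by simp)
  · rw [if_neg hy]
    rcases eq_or_ne y ⊥ with hb | hb
    · rw [hb]
      simp only [EReal.toReal_bot, ENNReal.ofReal_zero]
      exact zero_le
    · refine ENNReal.ofReal_le_ofReal ?_
      have := EReal.toReal_le_toReal h hb (EReal.coe_ne_top c)
      rwa [EReal.toReal_coe] at this

lemma U_zero_le (Uf : UtilityFun) {z : ℝ} (hz : 0 < z) : Uf.U 0 ≤ Uf.U z := by
  refine le_of_tendsto Uf.zero_lim ?_
  filter_upwards [Ioo_mem_nhdsGT_of_mem (Set.mem_Ico.mpr ⟨le_refl (0:ℝ), hz⟩)] with y hy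
  rw [Uf.pos_real y hy.1, Uf.pos_real z hz]
  exact_mod_cast Uf.mono (Set.mem_Ioi.mpr hy.1) (Set.mem_Ioi.mpr hz) (le_of_lt hy.2)

lemma U_mono (Uf : UtilityFun) {v z : ℝ} (h0 : 0 ≤ v) (hvz : v ≤ z) : Uf.U v ≤ Uf.U z := by
  rcases eq_or_lt_of_le h0 with h | h
  · rcases eq_or_lt_of_le (le_trans h0 hvz : (0:ℝ) ≤ z) with h2 | h2
    · rw [← h, ← h2]
    · rw [← h]
      exact U_zero_le Uf h2
  · rw [Uf.pos_real v h, Uf.pos_real z (lt_of_lt_of_le h hvz)]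
    exact_mod_cast Uf.mono (Set.mem_Ioi.mpr h) (Set.mem_Ioi.mpr (lt_of_lt_of_le h hvz)) hvz

lemma chord (Uf : UtilityFun) {p m z : ℝ} (hp : 0 < p) (hpm : p < m) (hmz : m < z) :
    (Uf.u z - Uf.u m) * (m - p) ≤ (z - m) * (Uf.u m - Uf.u p) := by
  have hzp : 0 < z - p := by linarith
  have hne : z - p ≠ 0 := ne_of_gt hzp
  have ha : 0 ≤ (z - m)/(z - p) := by
    apply div_nonneg <;> linarith
  have hb : 0 ≤ (m - p)/(z - p) := by
    apply div_nonneg <;> linarith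
  have hab : (z - m)/(z-p) + (m-p)/(z-p) = 1 := by field_simp; ring
  have hcomb := Uf.concave.2 (Set.mem_Ioi.mpr hp)
    (Set.mem_Ioi.mpr (show (0:ℝ) < z by linarith)) ha hb hab
  rw [smul_eq_mul, smul_eq_mul, smul_eq_mul, smul_eq_mul] at hcomb
  have hpt : (z - m)/(z-p) * p + (m-p)/(z-p) * z = m := by
    field_simp
    ring
  rw [hpt] at hcomb
  have h3 := mul_le_mul_of_nonneg_right hcomb (le_of_lt hzp)
  have h4 : ((z - m)/(z-p) * Uf.u p + (m-p)/(z-p) * Uf.u z) * (z - p)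
      = (z - m) * Uf.u p + (m - p) * Uf.u z := by
    field_simp
  rw [h4] at h3
  nlinarith [h3]

lemma conc_bound (Uf : UtilityFun) (c₀ ε : ℝ) (hc : 0 < c₀) (hε : 0 < ε) :
    ∃ a b : ℝ, 0 < a ∧ ∀ z w : ℝ, 0 ≤ z → c₀ * z + ε ≤ w →
      Uf.U z ≤ ((a * Uf.u w + b : ℝ) : EReal) := by
  rcases le_or_gt 1 c₀ with hc1 | hc1
  · refine ⟨1, 0, one_pos, fun z w hz hw => ?_⟩
    have hwpos : 0 < w := by nlinarith
    have h1 : Uf.U z ≤ Uf.U w := U_mono Uf hz (by nlinarith)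
    rw [Uf.pos_real w hwpos] at h1
    refine le_trans h1 ?_
    norm_num
  · set y0 := ε/2 with hy0def
    have hy0 : 0 < y0 := by rw [hy0def]; linarith
    set ρ := (1 - c₀)/c₀ with hρdef
    have hρ0 : 0 < ρ := by
      apply div_pos <;> linarith
    have hρc : c₀ * ρ = 1 - c₀ := by
      rw [hρdef]; field_simp
    refine ⟨1 + ρ, (1 + ρ) * |Uf.u y0|, by linarith, fun z w hz hw => ?_⟩
    -- real core inequality for Z := max z y0
    set Z := max z y0 with hZdef
    have hZy0 : y0 ≤ Z := le_max_right _ _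
    have hZpos : 0 < Z := lt_of_lt_of_le hy0 hZy0
    have hwZ : c₀ * Z + y0 ≤ w := by
      rcases max_cases z y0 with ⟨hc1', hc2⟩ | ⟨hc1', hc2⟩
      · rw [hZdef, hc1']; rw [hy0def]; nlinarith
      · rw [hZdef, hc1']; nlinarith
    set m := c₀ * Z + y0 with hmdef
    have hmy0 : y0 < m := by rw [hmdef]; nlinarith
    have hmw : m ≤ w := hwZ
    have hwpos : 0 < w := by nlinarith
    have hmpos : 0 < m := by nlinarith
    have humw : Uf.u m ≤ Uf.u w :=
      Uf.mono (Set.mem_Ioi.mpr hmpos) (Set.mem_Ioi.mpr hwpos) hmw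
    have huy0w : Uf.u y0 ≤ Uf.u w :=
      Uf.mono (Set.mem_Ioi.mpr hy0) (Set.mem_Ioi.mpr hwpos) (by nlinarith)
    have hcore : Uf.u Z ≤ (1 + ρ) * Uf.u w + (1 + ρ) * |Uf.u y0| := by
      have habs : (0:ℝ) ≤ |Uf.u y0| := abs_nonneg _
      have h3 : -|Uf.u y0| ≤ Uf.u y0 := neg_abs_le _
      have h8 : 0 ≤ ρ * Uf.u w + ρ * |Uf.u y0| := by
        have := mul_nonneg (le_of_lt hρ0)
          (show (0:ℝ) ≤ Uf.u w + |Uf.u y0| by linarith [huy0w])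
        linarith [mul_add ρ (Uf.u w) |Uf.u y0| ▸ this]
      have hexp : (1+ρ) * Uf.u w + (1+ρ) * |Uf.u y0|
          = Uf.u w + (ρ * Uf.u w + ρ * |Uf.u y0|) + |Uf.u y0| := by ring
      rcases le_or_gt Z m with hZm | hZm
      · have h1 : Uf.u Z ≤ Uf.u m :=
          Uf.mono (Set.mem_Ioi.mpr hZpos) (Set.mem_Ioi.mpr hmpos) hZm
        rw [hexp]
        linarith [humw, h1]
      · have hch := chord Uf hy0 hmy0 hZm
        have humy0 : Uf.u y0 ≤ Uf.u m :=
          Uf.mono (Set.mem_Ioi.mpr hy0) (Set.mem_Ioi.mpr hmpos) (le_of_lt hmy0)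
        have hmy0' : m - y0 = c₀ * Z := by rw [hmdef]; ring
        have hZm' : Z - m ≤ ρ * (m - y0) := by
          have hid : ρ * (m - y0) = (1 - c₀) * Z := by
            rw [hmy0', show ρ * (c₀ * Z) = (c₀ * ρ) * Z by ring, hρc]
          rw [hid, hmdef]
          linarith
        have h5 : (Uf.u Z - Uf.u m) * (m - y0)
            ≤ (ρ * (Uf.u m - Uf.u y0)) * (m - y0) := by
          calc (Uf.u Z - Uf.u m) * (m - y0) ≤ (Z - m) * (Uf.u m - Uf.u y0) := hch
          _ ≤ (ρ * (m - y0)) * (Uf.u m - Uf.u y0) :=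
              mul_le_mul_of_nonneg_right hZm' (by linarith [humy0])
          _ = (ρ * (Uf.u m - Uf.u y0)) * (m - y0) := by ring
        have hmy0pos : 0 < m - y0 := by linarith
        have h6 : Uf.u Z - Uf.u m ≤ ρ * (Uf.u m - Uf.u y0) :=
          le_of_mul_le_mul_right h5 hmy0pos
        have h6' : Uf.u Z ≤ Uf.u m + ρ * Uf.u m - ρ * Uf.u y0 := by
          have : ρ * (Uf.u m - Uf.u y0) = ρ * Uf.u m - ρ * Uf.u y0 := by ring
          linarith [this ▸ h6]
        have p1 : ρ * Uf.u m ≤ ρ * Uf.u w := mul_le_mul_of_nonneg_left humw (le_of_lt hρ0)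
        have p2 : ρ * -Uf.u y0 ≤ ρ * |Uf.u y0| :=
          mul_le_mul_of_nonneg_left (neg_le_abs _) (le_of_lt hρ0)
        rw [hexp]
        have p2' : -(ρ * Uf.u y0) ≤ ρ * |Uf.u y0| := by linarith [p2, (mul_neg ρ (Uf.u y0)) ▸ p2]
        linarith [humw, h6', p1, p2']
    -- from core to U z
    have hUz : Uf.U z ≤ ((Uf.u Z : ℝ) : EReal) := by
      rcases eq_or_lt_of_le hz with h0 | h0
      · have he : Uf.U z = Uf.U 0 := by rw [← h0]
        rw [he, ← Uf.pos_real Z hZpos]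
        exact U_zero_le Uf hZpos
      · have hzZ : z ≤ Z := le_max_left _ _
        rw [Uf.pos_real z h0]
        exact_mod_cast Uf.mono (Set.mem_Ioi.mpr h0) (Set.mem_Ioi.mpr hZpos) hzZ
    refine le_trans hUz ?_
    exact EReal.coe_le_coe_iff.mpr hcore

end VFF

namespace VFF

lemma expUtility_le_aux {Ω : Type*} [MeasurableSpace Ω] (P : Measure Ω)
    [IsProbabilityMeasure P] (Uf : UtilityFun) (X W : Ω → ℝ) (a b εh : ℝ) (K : EReal)
    (ha : 0 < a) (hε : 0 < εh)
    (hW : ∀ᵐ ω ∂P, εh ≤ W ω)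
    (hpt : ∀ᵐ ω ∂P, Uf.U (X ω) ≤ ((a * Uf.u (W ω) + b : ℝ) : EReal))
    (hWK : expUtility P Uf W ≤ K) (hKtop : K ≠ ⊤) :
    expUtility P Uf X ≤ ((a * K.toReal + a * |Uf.u εh| + |b| : ℝ) : EReal) := by
  classical
  have hWpt : ∀ᵐ ω ∂P, Uf.U (W ω) = ((Uf.u (W ω) : ℝ) : EReal) ∧ Uf.u εh ≤ Uf.u (W ω) := by
    filter_upwards [hW] with ω hω
    have hWpos : 0 < W ω := lt_of_lt_of_le hε hω
    exact ⟨Uf.pos_real _ hWpos,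
      Uf.mono (Set.mem_Ioi.mpr hε) (Set.mem_Ioi.mpr hWpos) hω⟩
  set Jm := ∫⁻ ω, erealPos (-(Uf.U (W ω))) ∂P with hJmdef
  set Jp := ∫⁻ ω, erealPos (Uf.U (W ω)) ∂P with hJpdef
  have hJm_le : Jm ≤ ENNReal.ofReal |Uf.u εh| := by
    rw [hJmdef]
    calc ∫⁻ ω, erealPos (-(Uf.U (W ω))) ∂P
        ≤ ∫⁻ _ω, ENNReal.ofReal |Uf.u εh| ∂P := by
          apply lintegral_mono_ae
          filter_upwards [hWpt] with ω hω
          rw [hω.1]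
          refine erealPos_le_ofReal ?_
          rw [← EReal.coe_neg]
          exact_mod_cast le_trans (by linarith [hω.2] : -Uf.u (W ω) ≤ -Uf.u εh)
            (neg_le_abs _)
      _ = ENNReal.ofReal |Uf.u εh| := by
          rw [lintegral_const, measure_univ, mul_one]
  have hJm_top : Jm ≠ ⊤ := (lt_of_le_of_lt hJm_le ENNReal.ofReal_lt_top).ne
  have hEW : expUtility P Uf W = ((Jp : ENNReal) : EReal) - ((Jm : ENNReal) : EReal) := by
    rw [expUtility, if_neg (by rw [← hJmdef]; exact hJm_top)]
  have hJp_top : Jp ≠ ⊤ := by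
    intro htop
    have h1 : ((Jm : ENNReal) : EReal) = (((Jm.toReal : ℝ)) : EReal) := by
      conv_rhs => rw [← EReal.toReal_coe_ennreal]
      rw [EReal.coe_toReal (EReal.coe_ennreal_eq_top_iff.not.mpr hJm_top)
        (EReal.coe_ennreal_ne_bot _)]
    have : expUtility P Uf W = ⊤ := by
      rw [hEW, htop, EReal.coe_ennreal_top, h1, EReal.top_sub_coe]
    exact hKtop (top_le_iff.mp (this ▸ hWK))
  -- real versions
  set jp := Jp.toReal with hjpdef
  set jm := Jm.toReal with hjmdef
  have hjm_le : jm ≤ |Uf.u εh| :=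
    ENNReal.toReal_le_of_le_ofReal (abs_nonneg _) hJm_le
  have hcoeJp : ((Jp : ENNReal) : EReal) = ((jp : ℝ) : EReal) := by
    conv_rhs => rw [hjpdef, ← EReal.toReal_coe_ennreal]
    rw [EReal.coe_toReal (EReal.coe_ennreal_eq_top_iff.not.mpr hJp_top)
      (EReal.coe_ennreal_ne_bot _)]
  have hcoeJm : ((Jm : ENNReal) : EReal) = ((jm : ℝ) : EReal) := by
    conv_rhs => rw [hjmdef, ← EReal.toReal_coe_ennreal]
    rw [EReal.coe_toReal (EReal.coe_ennreal_eq_top_iff.not.mpr hJm_top)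
      (EReal.coe_ennreal_ne_bot _)]
  have hEWr : expUtility P Uf W = ((jp - jm : ℝ) : EReal) := by
    rw [hEW, hcoeJp, hcoeJm, ← EReal.coe_sub]
  have hjpK : jp - jm ≤ K.toReal := by
    have h1 : expUtility P Uf W ≠ ⊥ := by rw [hEWr]; exact EReal.coe_ne_bot _
    have h2 := EReal.toReal_le_toReal hWK (by rw [hEWr]; exact EReal.coe_ne_bot _) hKtop
    rwa [hEWr, EReal.toReal_coe] at h2
  -- bound the positive part of X
  by_cases hX : (∫⁻ ω, erealPos (-(Uf.U (X ω))) ∂P) = ⊤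
  · rw [expUtility, if_pos hX]
    exact bot_le
  · rw [expUtility, if_neg hX]
    have hsub : ((∫⁻ ω, erealPos (Uf.U (X ω)) ∂P : ENNReal) : EReal)
          - ((∫⁻ ω, erealPos (-(Uf.U (X ω))) ∂P : ENNReal) : EReal)
        ≤ ((∫⁻ ω, erealPos (Uf.U (X ω)) ∂P : ENNReal) : EReal) := by
      rw [sub_eq_add_neg]
      calc _ ≤ ((∫⁻ ω, erealPos (Uf.U (X ω)) ∂P : ENNReal) : EReal) + 0 := by
            apply add_le_add_right
            have h := EReal.neg_le_neg_iff.mpr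
              (EReal.coe_ennreal_nonneg (∫⁻ ω, erealPos (-(Uf.U (X ω))) ∂P))
            rwa [neg_zero] at h
        _ = _ := add_zero _
    refine le_trans hsub ?_
    have hIp : (∫⁻ ω, erealPos (Uf.U (X ω)) ∂P)
        ≤ ENNReal.ofReal a * Jp + ENNReal.ofReal |b| := by
      calc ∫⁻ ω, erealPos (Uf.U (X ω)) ∂P
          ≤ ∫⁻ ω, (ENNReal.ofReal a * erealPos (Uf.U (W ω)) + ENNReal.ofReal |b|) ∂P := by
            apply lintegral_mono_ae
            filter_upwards [hpt, hWpt] with ω h1 h2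
            calc erealPos (Uf.U (X ω)) ≤ ENNReal.ofReal (a * Uf.u (W ω) + b) :=
                  erealPos_le_ofReal h1
              _ ≤ ENNReal.ofReal (a * Uf.u (W ω)) + ENNReal.ofReal |b| := by
                  refine le_trans ENNReal.ofReal_add_le ?_
                  exact add_le_add_right (ENNReal.ofReal_le_ofReal (le_abs_self b)) _
              _ = ENNReal.ofReal a * ENNReal.ofReal (Uf.u (W ω)) + ENNReal.ofReal |b| := by
                  rw [ENNReal.ofReal_mul (le_of_lt ha)]
              _ = ENNReal.ofReal a * erealPos (Uf.U (W ω)) + ENNReal.ofReal |b| := by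
                  rw [h2.1, erealPos_coe]
        _ = ENNReal.ofReal a * Jp + ENNReal.ofReal |b| := by
            rw [lintegral_add_right _ measurable_const, lintegral_const, measure_univ,
              mul_one, lintegral_const_mul' _ _ ENNReal.ofReal_ne_top, hJpdef]
    calc ((∫⁻ ω, erealPos (Uf.U (X ω)) ∂P : ENNReal) : EReal)
        ≤ ((ENNReal.ofReal a * Jp + ENNReal.ofReal |b| : ENNReal) : EReal) :=
          EReal.coe_ennreal_le_coe_ennreal_iff.mpr hIp
      _ = ((a * jp + |b| : ℝ) : EReal) := by
          have h1 : ENNReal.ofReal a * Jp = ENNReal.ofReal (a * jp) := by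
            conv_lhs => rw [← ENNReal.ofReal_toReal hJp_top,
              ← ENNReal.ofReal_mul (le_of_lt ha)]
          have hjp0 : 0 ≤ a * jp := mul_nonneg (le_of_lt ha) ENNReal.toReal_nonneg
          rw [h1, EReal.coe_ennreal_add, EReal.coe_ennreal_ofReal,
            EReal.coe_ennreal_ofReal, max_eq_left hjp0, max_eq_left (abs_nonneg b),
            ← EReal.coe_add]
      _ ≤ ((a * K.toReal + a * |Uf.u εh| + |b| : ℝ) : EReal) := by
          refine EReal.coe_le_coe_iff.mpr ?_
          have hjp : jp ≤ K.toReal + |Uf.u εh| := by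
            linarith [hjpK, hjm_le]
          nlinarith [hjp, le_of_lt ha]

end VFF

namespace VFF

lemma mul_le_mul_nonpos_right' {a b c : ℝ} (h : b ≤ a) (hc : c ≤ 0) : a * c ≤ b * c :=
  mul_le_mul_of_nonpos_right h hc

lemma final_arith (q κ x x₀ y Bfv μ : ℝ) (hq0 : 0 < q) (hq1 : q ≤ 1) (hκ0 : 0 < κ)
    (hx₀ : 0 < x₀) (hκx : κ * x = x₀/2) (hBf : 1 ≤ Bfv) (hμl : q ≤ μ) (hμu : μ ≤ 1)
    (hy : 0 ≤ y) :
    q * κ * y + q * (x₀/2) ≤ x₀ + μ * ((κ * y + (x₀ - κ * x) * Bfv) - x₀) := by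
  have hxx : x₀ - κ * x = x₀/2 := by linarith
  rw [hxx]
  rcases le_or_gt x₀ (κ * y + x₀/2 * Bfv) with hc | hc
  · have h1 : q * ((κ * y + x₀/2 * Bfv) - x₀) ≤ μ * ((κ * y + x₀/2 * Bfv) - x₀) :=
      mul_le_mul_of_nonneg_right hμl (by linarith)
    have hqD : q * ((κ * y + x₀/2 * Bfv) - x₀)
        = q * κ * y + q * (x₀/2) * Bfv - q * x₀ := by ring
    have hint1 : q * (x₀/2) * 1 ≤ q * (x₀/2) * Bfv :=
      mul_le_mul_of_nonneg_left hBf (by positivity)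
    have hint2 : 0 ≤ (1 - q) * x₀ := mul_nonneg (by linarith) (le_of_lt hx₀)
    nlinarith [h1, hqD, hint1, hint2]
  · have h1 : 1 * ((κ * y + x₀/2 * Bfv) - x₀) ≤ μ * ((κ * y + x₀/2 * Bfv) - x₀) :=
      mul_le_mul_nonpos_right' hμu (by linarith)
    have hint1 : 0 ≤ ((1 - q) * κ) * y :=
      mul_nonneg (mul_nonneg (by linarith) (le_of_lt hκ0)) hy
    have hint2 : x₀/2 * 1 ≤ x₀/2 * Bfv :=
      mul_le_mul_of_nonneg_left hBf (by linarith)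
    nlinarith [h1, hint1, hint2]

end VFF

/-- If the value function is finite for some tax rate `α₀ ∈ [0,1)` and some
initial capital `x₀ > 0`, then it is finite for every tax rate `α ∈ [0,1)` and every
initial capital `x > 0`. -/
theorem valueFn_finite_all_of_finite_one
    (M : Market Ω T d) (Uf : UtilityFun) (α₀ x₀ : ℝ)
    (hα₀0 : 0 ≤ α₀) (hα₀1 : α₀ < 1) (hx₀ : 0 < x₀)
    (h : M.valueFn Uf α₀ x₀ < ⊤) :
    ∀ α : ℝ, 0 ≤ α → α < 1 → ∀ x : ℝ, 0 < x → M.valueFn Uf α x < ⊤ := by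
  intro α hα0 hα1 x hx
  haveI : IsProbabilityMeasure M.P := M.hProb
  classical
  set q : ℝ := (1 - α₀)^T with hqdef
  have hq0 : 0 < q := pow_pos (by linarith) T
  have hq1 : q ≤ 1 := pow_le_one₀ (by linarith) (by linarith)
  set κ : ℝ := x₀ / (2 * x) with hκdef
  have hκ0 : 0 < κ := by rw [hκdef]; positivity
  have hκx : κ * x = x₀ / 2 := by rw [hκdef]; field_simp
  set c₀ : ℝ := q * κ with hc₀def
  have hc₀ : 0 < c₀ := mul_pos hq0 hκ0
  set εh : ℝ := q * (x₀ / 2) with hεdef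
  have hεh : 0 < εh := by rw [hεdef]; positivity
  obtain ⟨a, b, ha, hconc⟩ := VFF.conc_bound Uf c₀ εh hc₀ hεh
  have hmain : M.valueFn Uf α x
      ≤ ((a * (M.valueFn Uf α₀ x₀).toReal + a * |Uf.u εh| + |b| : ℝ) : EReal) := by
    unfold Market.valueFn
    refine iSup_le fun N => iSup_le fun hN => ?_
    obtain ⟨hNstr, hNadm⟩ := hN
    set Y : Ω → ℝ := fun ω => wealth0 (fun t => M.S t ω) (fun t => M.r t ω)
      (fun i t => N i t ω) x T with hYdef
    have hVY : ∀ ω, M.V α x N ω ≤ Y ω := fun ω =>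
      VFF.etaT_le_wealth0 α x _ _ _ T (fun t => M.r_nonneg t ω) hα0
        (fun i j => hNstr.2.2.2.1 i ω j)
    set Hκ : ℕ → Ω → Fin d → ℝ :=
      fun t ω j => ∑ i ∈ Finset.range (t+1), κ * N i t ω j with hHdef
    have hHmeas : ∀ s, Measurable[M.F s] (Hκ s) := by
      intro s
      refine @measurable_pi_lambda Ω (Fin d) (fun _ => ℝ) (M.F s) (fun _ => inferInstance)
        _ (fun j => ?_)
      apply Finset.measurable_sum
      intro i _
      exact ((measurable_pi_apply j).comp (hNstr.1 i s)).const_mul κ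
    have hHnn : ∀ s ω j, 0 ≤ Hκ s ω j := by
      intro s ω j
      exact Finset.sum_nonneg fun i _ => mul_nonneg (le_of_lt hκ0) (hNstr.2.1 i s ω j)
    have hHT : ∀ ω j, Hκ T ω j = 0 := by
      intro ω j
      rw [hHdef]
      simp only
      refine Finset.sum_eq_zero fun i _ => ?_
      rw [hNstr.2.2.2.1 i ω j, mul_zero]
    have hstr : M.IsStrategy (VFF.FWso M α₀ x₀ Hκ) :=
      VFF.FWso_isStrategy M α₀ x₀ Hκ hα₀0 hα₀1 hHmeas hHnn hHT
    set W : Ω → ℝ := fun ω => M.V α₀ x₀ (VFF.FWso M α₀ x₀ Hκ) ω with hWdef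
    have hXT : ∀ ω : Ω, VFF.Xf x₀ (fun u => M.S u ω) (fun u => M.r u ω)
          (fun u => Hκ u ω) T
        = κ * Y ω + (x₀ - κ * x) * VFF.Bf (fun u => M.r u ω) T := by
      intro ω
      have e1 : (fun u => Hκ u ω)
          = (fun u (j : Fin d) => ∑ i ∈ Finset.range (u+1),
              (fun i t (j : Fin d) => κ * N i t ω j) i u j) := rfl
      rw [e1, ← VFF.wealth0_eq_Xf x₀ _ _ _ T]
      exact VFF.wealth0_scale x _ _ (fun i t => N i t ω) κ x₀ T
    have hWge : ∀ ω, 0 ≤ Y ω → c₀ * Y ω + εh ≤ W ω := by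
      intro ω hY
      obtain ⟨μ, hμl, hμu, hμw⟩ := VFF.FWso_wealth M α₀ x₀ Hκ
        (fun t ω' => M.r_nonneg t ω') hα₀0 hα₀1 hx₀ hHT ω
      rw [hXT ω] at hμw
      refine le_trans ?_ hμw
      have := VFF.final_arith q κ x x₀ (Y ω) (VFF.Bf (fun u => M.r u ω) T) μ
        hq0 hq1 hκ0 hx₀ hκx
        (VFF.Bf_ge_one (fun u => M.r u ω) (fun t => M.r_nonneg t ω) T)
        hμl hμu hY
      rw [hc₀def, hεdef]
      linarith [this]
    have hYae : ∀ᵐ ω ∂M.P, 0 ≤ Y ω := hNadm.mono fun ω h' => le_trans h' (hVY ω)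
    have hWae : ∀ᵐ ω ∂M.P, εh ≤ W ω := by
      filter_upwards [hYae] with ω hY
      have h1 := hWge ω hY
      nlinarith [mul_nonneg (le_of_lt hc₀) hY]
    have hWadm : ∀ᵐ ω ∂M.P, 0 ≤ M.V α₀ x₀ (VFF.FWso M α₀ x₀ Hκ) ω := by
      filter_upwards [hWae] with ω h'
      have : (0:ℝ) < εh := hεh
      linarith [h']
    have hmem : VFF.FWso M α₀ x₀ Hκ ∈
        {N' : ℕ → ℕ → Ω → Fin d → ℝ |
          M.IsStrategy N' ∧ ∀ᵐ ω ∂M.P, 0 ≤ M.V α₀ x₀ N' ω} := ⟨hstr, hWadm⟩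
    have hWK : expUtility M.P Uf W ≤ M.valueFn Uf α₀ x₀ := by
      unfold Market.valueFn
      exact le_iSup₂ (f := fun N' (_ : N' ∈ {N' : ℕ → ℕ → Ω → Fin d → ℝ |
          M.IsStrategy N' ∧ ∀ᵐ ω ∂M.P, 0 ≤ M.V α₀ x₀ N' ω}) =>
        expUtility M.P Uf fun ω => M.V α₀ x₀ N' ω) (VFF.FWso M α₀ x₀ Hκ) hmem
    have hpt : ∀ᵐ ω ∂M.P, Uf.U (M.V α x N ω) ≤ ((a * Uf.u (W ω) + b : ℝ) : EReal) := by
      filter_upwards [hNadm, hYae] with ω h0 hY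
      exact le_trans (VFF.U_mono Uf h0 (hVY ω)) (hconc (Y ω) (W ω) hY (hWge ω hY))
    exact VFF.expUtility_le_aux M.P Uf (fun ω => M.V α x N ω) W a b εh
      (M.valueFn Uf α₀ x₀) ha hεh hWae hpt hWK (ne_of_lt h)
  exact lt_of_le_of_lt hmain (EReal.coe_lt_top _)

end
end

section
/- Let K : Ω ⇉ ℝ^d be a compact-valued ℱ_t-measurable random set with 0 ∈ K(ω) for all ω and dim(K) ≤ k almost surely, where k ∈ {0,…,d}. Then there exist ℱ_t-measurable random vectors Y¹,…,Y^k with Y^i(ω) ∈ K(ω) for all ω ∈ Ω, i = 1,…,k, such that for every Y ∈ L^0(ℱ_t; K) there exist ℱ_t-measurable random variables λ_i taking values in [−2^{i−1}, 2^{i−1}], i = 1,…,k, with Y = Σ_{i=1}^k λ_i Y^i almost surely. -/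
open MeasureTheory Filter Finset

noncomputable section
open scoped Classical

variable {Ω : Type*} [m0 : MeasurableSpace Ω] {T d : ℕ}

variable {Ω : Type*} [m0 : MeasurableSpace Ω] {T d : ℕ}

set_option linter.unusedSectionVars false

section RS19Section
open Topology
open scoped ENNReal NNReal

namespace RS19

variable {X : Type*} [MetricSpace X]
  [SecondCountableTopology X] [MeasurableSpace X] [OpensMeasurableSpace X]

/-- Hit-measurability with respect to closed sets. -/
def HitClosed (K : Ω → Set X) : Prop :=
  ∀ C : Set X, IsClosed C → MeasurableSet {ω | (K ω ∩ C).Nonempty}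

theorem hitClosed_of_hitOpen {K : Ω → Set X}
    (hK : ∀ O : Set X, IsOpen O → MeasurableSet {ω | (K ω ∩ O).Nonempty})
    (hc : ∀ ω, IsCompact (K ω)) : HitClosed K := by
  intro C hC
  have key : {ω | (K ω ∩ C).Nonempty} =
      ⋂ n : ℕ, {ω | (K ω ∩ Metric.thickening (1 / (n + 1)) C).Nonempty} := by
    ext ω
    simp only [Set.mem_iInter, Set.mem_setOf_eq]
    constructor
    · rintro ⟨y, hyK, hyC⟩ n
      exact ⟨y, hyK, Metric.self_subset_thickening (by positivity) C hyC⟩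
    · intro h
      have h2 : ∀ n : ℕ, (K ω ∩ Metric.cthickening (1 / (n + 1)) C).Nonempty := fun n =>
        (h n).mono (Set.inter_subset_inter_right _ (Metric.thickening_subset_cthickening _ _))
      have h3 : (⋂ n : ℕ, K ω ∩ Metric.cthickening (1 / (n + 1)) C).Nonempty := by
        apply IsCompact.nonempty_iInter_of_sequence_nonempty_isCompact_isClosed
        · intro n
          apply Set.inter_subset_inter_right
          apply Metric.cthickening_mono
          have h1 : (0:ℝ) < (n:ℝ) + 1 := by positivity
          have h2' : (0:ℝ) < (n:ℝ) + 1 + 1 := by positivity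
          rw [div_le_div_iff₀ (by push_cast; linarith) h1]
          push_cast
          nlinarith
        · exact h2
        · exact (hc ω).inter_right (Metric.isClosed_cthickening)
        · exact fun n => ((hc ω).inter_right Metric.isClosed_cthickening).isClosed
      obtain ⟨y, hy⟩ := h3
      simp only [Set.mem_iInter, Set.mem_inter_iff] at hy
      refine ⟨y, (hy 0).1, ?_⟩
      have hinf : EMetric.infEdist y C = 0 := by
        refine le_antisymm ?_ zero_le
        have ht : Tendsto (fun n : ℕ => ENNReal.ofReal (1 / (n + 1))) atTop (𝓝 0) := by
          have := ENNReal.tendsto_ofReal tendsto_one_div_add_atTop_nhds_zero_nat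
          simpa using this
        refine le_of_tendsto_of_tendsto' tendsto_const_nhds ht fun n => ?_
        exact (Metric.mem_cthickening_iff).mp (hy n).2
      rw [← hC.closure_eq]
      exact EMetric.mem_closure_iff_infEdist_zero.mpr hinf
  rw [key]
  exact MeasurableSet.iInter fun n => hK _ Metric.isOpen_thickening

theorem hitOpen_of_hitClosed {K : Ω → Set X} (hK : HitClosed K) :
    ∀ O : Set X, IsOpen O → MeasurableSet {ω | (K ω ∩ O).Nonempty} := by
  intro O hO
  set C : ℕ → Set X := fun n => {x | (1 / ((n:ℝ≥0∞) + 1)) ≤ EMetric.infEdist x Oᶜ} with hCdef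
  have hCclosed : ∀ n, IsClosed (C n) := fun n =>
    IsClosed.preimage EMetric.continuous_infEdist isClosed_Ici
  have hCO : O = ⋃ n, C n := by
    ext x
    simp only [Set.mem_iUnion, hCdef, Set.mem_setOf_eq]
    constructor
    · intro hx
      have hpos : 0 < EMetric.infEdist x Oᶜ := by
        rw [pos_iff_ne_zero]
        intro h0
        have := EMetric.mem_closure_iff_infEdist_zero.mpr h0
        rw [(isClosed_compl_iff.mpr hO).closure_eq] at this
        exact this hx
      rcases eq_or_ne (EMetric.infEdist x Oᶜ) ⊤ with htop | htop
      · exact ⟨0, by rw [htop]; exact le_top⟩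
      · obtain ⟨n, hn⟩ := ENNReal.exists_inv_nat_lt (pos_iff_ne_zero.mp hpos)
        refine ⟨n, le_trans ?_ hn.le⟩
        rw [one_div]
        exact ENNReal.inv_le_inv.mpr (by exact_mod_cast Nat.le_succ n)
    · rintro ⟨n, hn⟩
      have hpos : 0 < EMetric.infEdist x Oᶜ := by
        refine lt_of_lt_of_le ?_ hn
        simp [ENNReal.div_pos_iff]
      by_contra hx
      have : EMetric.infEdist x Oᶜ = 0 := EMetric.infEdist_zero_of_mem hx
      rw [this] at hpos; exact lt_irrefl _ hpos
  have : {ω | (K ω ∩ O).Nonempty} = ⋃ n, {ω | (K ω ∩ C n).Nonempty} := by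
    ext ω
    simp only [Set.mem_iUnion, Set.mem_setOf_eq, hCO]
    constructor
    · rintro ⟨y, hyK, hyO⟩
      obtain ⟨n, hn⟩ := Set.mem_iUnion.mp hyO
      exact ⟨n, y, hyK, hn⟩
    · rintro ⟨n, y, hyK, hyC⟩
      exact ⟨y, hyK, Set.mem_iUnion.mpr ⟨n, hyC⟩⟩
  rw [this]
  exact MeasurableSet.iUnion fun n => hK _ (hCclosed n)

theorem HitClosed.interCond {K : Ω → Set X} (hK : HitClosed K) {C : Set X} (hC : IsClosed C) :
    HitClosed (fun ω => if (K ω ∩ C).Nonempty then K ω ∩ C else K ω) := by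
  intro D hD
  have : {ω | ((if (K ω ∩ C).Nonempty then K ω ∩ C else K ω) ∩ D).Nonempty} =
      ({ω | (K ω ∩ C).Nonempty} ∩ {ω | (K ω ∩ (C ∩ D)).Nonempty}) ∪
        ({ω | (K ω ∩ C).Nonempty}ᶜ ∩ {ω | (K ω ∩ D).Nonempty}) := by
    ext ω
    by_cases h : (K ω ∩ C).Nonempty <;>
      simp [h, Set.inter_assoc]
  rw [this]
  exact ((hK C hC).inter (hK _ (hC.inter hD))).union (((hK C hC).compl).inter (hK D hD))

set_option maxHeartbeats 1000000 in
theorem exists_selection [CompleteSpace X] [Nonempty X] [BorelSpace X] {K : Ω → Set X}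
    (hK : HitClosed K) (hc : ∀ ω, IsCompact (K ω)) (hne : ∀ ω, (K ω).Nonempty) :
    ∃ f : Ω → X, Measurable f ∧ ∀ ω, f ω ∈ K ω := by
  set x : ℕ → X := TopologicalSpace.denseSeq X with hxdef
  have hx : DenseRange x := TopologicalSpace.denseRange_denseSeq X
  set F : ℕ → Ω → Set X := fun n => Nat.rec K
    (fun n Fn ω => Fn ω ∩ Metric.closedBall
      (x (sInf {m | (Fn ω ∩ Metric.closedBall (x m) ((1/2:ℝ)^n)).Nonempty})) ((1/2:ℝ)^n)) n
    with hFdef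
  have hcball : ∀ m (n : ℕ), IsClosed (Metric.closedBall (x m) ((1/2:ℝ)^n)) :=
    fun m n => Metric.isClosed_closedBall
  set c : ℕ → Ω → ℕ :=
    fun n ω => sInf {m | (F n ω ∩ Metric.closedBall (x m) ((1/2:ℝ)^n)).Nonempty} with hcdef
  have hFs : ∀ n ω, F (n+1) ω = F n ω ∩ Metric.closedBall (x (c n ω)) ((1/2:ℝ)^n) :=
    fun n ω => rfl
  have hInv : ∀ n, (∀ ω, (F n ω).Nonempty) ∧ (∀ ω, IsCompact (F n ω)) ∧ HitClosed (F n) := by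
    intro n
    induction n with
    | zero => exact ⟨hne, hc, hK⟩
    | succ n ih =>
      obtain ⟨ihne, ihc, ihm⟩ := ih
      have hSne : ∀ ω,
          {m | (F n ω ∩ Metric.closedBall (x m) ((1/2:ℝ)^n)).Nonempty}.Nonempty := by
        intro ω
        obtain ⟨y, hy⟩ := ihne ω
        obtain ⟨m, hm⟩ := hx.exists_dist_lt y (by positivity : (0:ℝ) < (1/2)^n)
        exact ⟨m, y, hy, Metric.mem_closedBall.mpr hm.le⟩
      have hmem : ∀ ω, (F (n+1) ω).Nonempty := by
        intro ω
        rw [hFs]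
        exact Nat.sInf_mem (hSne ω)
      refine ⟨hmem, fun ω => by rw [hFs]; exact (ihc ω).inter_right (hcball _ _), ?_⟩
      have hcm : ∀ m, MeasurableSet {ω | c n ω = m} := by
        intro m
        have heq : {ω | c n ω = m} =
            {ω | (F n ω ∩ Metric.closedBall (x m) ((1/2:ℝ)^n)).Nonempty} ∩
              ⋂ j ∈ Finset.range m,
                {ω | (F n ω ∩ Metric.closedBall (x j) ((1/2:ℝ)^n)).Nonempty}ᶜ := by
          ext ω
          simp only [Set.mem_inter_iff, Set.mem_setOf_eq, Set.mem_iInter, Set.mem_compl_iff,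
            Finset.mem_range, hcdef]
          constructor
          · rintro rfl
            exact ⟨Nat.sInf_mem (hSne ω), fun j hj => Nat.notMem_of_lt_sInf hj⟩
          · rintro ⟨hm, hlt⟩
            refine le_antisymm (Nat.sInf_le hm) ?_
            by_contra hcon
            push_neg at hcon
            exact hlt _ hcon (Nat.sInf_mem (hSne ω))
        rw [heq]
        exact (ihm _ (hcball m n)).inter
          (MeasurableSet.biInter (Finset.range m).countable_toSet
            fun j _ => (ihm _ (hcball j n)).compl)
      intro D hD
      have heq : {ω | (F (n+1) ω ∩ D).Nonempty} = ⋃ m, ({ω | c n ω = m} ∩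
          {ω | (F n ω ∩ (Metric.closedBall (x m) ((1/2:ℝ)^n) ∩ D)).Nonempty}) := by
        ext ω
        simp only [Set.mem_iUnion, Set.mem_inter_iff, Set.mem_setOf_eq]
        constructor
        · intro h
          refine ⟨c n ω, rfl, ?_⟩
          rw [hFs, Set.inter_assoc] at h
          exact h
        · rintro ⟨m, rfl, h⟩
          rw [hFs, Set.inter_assoc]
          exact h
      rw [heq]
      exact MeasurableSet.iUnion fun m =>
        (hcm m).inter (ihm _ ((hcball m n).inter hD))
  -- the centre sequence
  set g : ℕ → Ω → X := fun n ω => x (c n ω) with hgdef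
  have hgm : ∀ n, Measurable (g n) := by
    intro n
    apply Measurable.comp (measurable_from_top (f := x))
    apply measurable_to_countable'
    intro m
    have : (c n) ⁻¹' {m} = {ω | c n ω = m} := by ext ω; simp
    rw [this]
    -- redo measurability of level sets (available inside induction only); reprove:
    have heq : {ω | c n ω = m} =
        {ω | (F n ω ∩ Metric.closedBall (x m) ((1/2:ℝ)^n)).Nonempty} ∩
          ⋂ j ∈ Finset.range m,
            {ω | (F n ω ∩ Metric.closedBall (x j) ((1/2:ℝ)^n)).Nonempty}ᶜ := by
      have hSne : ∀ ω,
          {m | (F n ω ∩ Metric.closedBall (x m) ((1/2:ℝ)^n)).Nonempty}.Nonempty := by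
        intro ω
        obtain ⟨y, hy⟩ := (hInv n).1 ω
        obtain ⟨m', hm'⟩ := hx.exists_dist_lt y (by positivity : (0:ℝ) < (1/2)^n)
        exact ⟨m', y, hy, Metric.mem_closedBall.mpr hm'.le⟩
      ext ω
      simp only [Set.mem_inter_iff, Set.mem_setOf_eq, Set.mem_iInter, Set.mem_compl_iff,
        Finset.mem_range, hcdef]
      constructor
      · rintro rfl
        exact ⟨Nat.sInf_mem (hSne ω), fun j hj => Nat.notMem_of_lt_sInf hj⟩
      · rintro ⟨hm, hlt⟩
        refine le_antisymm (Nat.sInf_le hm) ?_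
        by_contra hcon
        push_neg at hcon
        exact hlt _ hcon (Nat.sInf_mem (hSne ω))
    rw [heq]
    exact ((hInv n).2.2 _ (hcball m n)).inter
      (MeasurableSet.biInter (Finset.range m).countable_toSet
        fun j _ => ((hInv n).2.2 _ (hcball j n)).compl)
  have hFsub : ∀ n ω, F (n+1) ω ⊆ Metric.closedBall (g n ω) ((1/2:ℝ)^n) := by
    intro n ω
    rw [hFs]
    exact Set.inter_subset_right
  have hFmono : ∀ n ω, F (n+1) ω ⊆ F n ω := by
    intro n ω; rw [hFs]; exact Set.inter_subset_left
  have hFK : ∀ n ω, F n ω ⊆ K ω := by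
    intro n
    induction n with
    | zero => exact fun ω => subset_rfl
    | succ n ih => exact fun ω => (hFmono n ω).trans (ih ω)
  have hdistg : ∀ n ω, dist (g n ω) (g (n+1) ω) ≤ 2 * (1/2:ℝ)^n := by
    intro n ω
    obtain ⟨y, hy⟩ := (hInv (n+2)).1 ω
    have hy1 : y ∈ Metric.closedBall (g n ω) ((1/2:ℝ)^n) :=
      hFsub n ω (hFmono (n+1) ω hy)
    have hy2 : y ∈ Metric.closedBall (g (n+1) ω) ((1/2:ℝ)^(n+1)) := hFsub (n+1) ω hy
    have := dist_triangle (g n ω) y (g (n+1) ω)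
    have h1 : dist (g n ω) y ≤ (1/2:ℝ)^n := by
      rw [dist_comm]; exact Metric.mem_closedBall.mp hy1
    have h2 : dist y (g (n+1) ω) ≤ (1/2:ℝ)^(n+1) := Metric.mem_closedBall.mp hy2
    have h3 : (1/2:ℝ)^(n+1) ≤ (1/2)^n := by
      apply pow_le_pow_of_le_one <;> norm_num
    linarith
  have hcauchy : ∀ ω, CauchySeq fun n => g n ω := fun ω =>
    cauchySeq_of_le_geometric (1/2) 2 (by norm_num) (fun n => hdistg n ω)
  have hlim : ∀ ω, ∃ l, Tendsto (fun n => g n ω) atTop (𝓝 l) := fun ω =>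
    cauchySeq_tendsto_of_complete (hcauchy ω)
  classical
  set f : Ω → X := fun ω => (hlim ω).choose with hf
  have htend : ∀ ω, Tendsto (fun n => g n ω) atTop (𝓝 (f ω)) := fun ω => (hlim ω).choose_spec
  have hfm : Measurable f :=
    measurable_of_tendsto_metrizable' atTop hgm (tendsto_pi_nhds.mpr htend)
  refine ⟨f, hfm, fun ω => ?_⟩
  have hclosed : IsClosed (K ω) := (hc ω).isClosed
  rw [← hclosed.closure_eq]
  rw [Metric.mem_closure_iff]
  intro ε hε
  obtain ⟨n, hn⟩ := Metric.tendsto_atTop.mp (htend ω) (ε/2) (by linarith)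
  obtain ⟨n2, hn2⟩ := exists_pow_lt_of_lt_one (show (0:ℝ) < ε/2 by linarith)
    (show (1/2:ℝ) < 1 by norm_num)
  set N := max n n2
  obtain ⟨y, hy⟩ := (hInv (N+1)).1 ω
  refine ⟨y, hFK (N+1) ω hy, ?_⟩
  have h1 : dist (f ω) (g N ω) < ε/2 := by
    rw [dist_comm]; exact hn N (le_max_left _ _)
  have h2 : dist (g N ω) y ≤ (1/2:ℝ)^N := by
    rw [dist_comm]
    exact Metric.mem_closedBall.mp (hFsub N ω hy)
  have h3 : (1/2:ℝ)^N ≤ (1/2)^n2 := by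
    apply pow_le_pow_of_le_one (by norm_num) (by norm_num) (le_max_right _ _)
  calc dist (f ω) y ≤ dist (f ω) (g N ω) + dist (g N ω) y := dist_triangle _ _ _
    _ < ε/2 + ε/2 := by have := lt_of_le_of_lt (h2.trans h3) hn2; linarith
    _ = ε := by ring

theorem exists_dense_selections [CompleteSpace X] [Nonempty X] [BorelSpace X] {K : Ω → Set X}
    (hK : HitClosed K) (hc : ∀ ω, IsCompact (K ω)) (hne : ∀ ω, (K ω).Nonempty) :
    ∃ f : ℕ × ℕ → Ω → X, (∀ p, Measurable (f p)) ∧ (∀ p ω, f p ω ∈ K ω) ∧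
      ∀ ω, ∀ y ∈ K ω, ∀ ε : ℝ, 0 < ε → ∃ p, dist y (f p ω) < ε := by
  set x : ℕ → X := TopologicalSpace.denseSeq X with hxdef
  have hx : DenseRange x := TopologicalSpace.denseRange_denseSeq X
  set Kp : ℕ × ℕ → Ω → Set X := fun p ω =>
    if (K ω ∩ Metric.closedBall (x p.1) ((1/2:ℝ)^p.2)).Nonempty
      then K ω ∩ Metric.closedBall (x p.1) ((1/2:ℝ)^p.2) else K ω with hKp
  have hKpm : ∀ p, HitClosed (Kp p) := fun p => hK.interCond Metric.isClosed_closedBall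
  have hKpc : ∀ p ω, IsCompact (Kp p ω) := by
    intro p ω
    simp only [hKp]
    split
    · exact (hc ω).inter_right Metric.isClosed_closedBall
    · exact hc ω
  have hKpne : ∀ p ω, (Kp p ω).Nonempty := by
    intro p ω
    simp only [hKp]
    split
    · assumption
    · exact hne ω
  have hKpsub : ∀ p ω, Kp p ω ⊆ K ω := by
    intro p ω
    simp only [hKp]
    split
    · exact Set.inter_subset_left
    · exact subset_rfl
  have H : ∀ p : ℕ × ℕ, ∃ f : Ω → X, Measurable f ∧ ∀ ω, f ω ∈ Kp p ω :=
    fun p => exists_selection (hKpm p) (hKpc p) (hKpne p)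
  choose f hfm hfmem using H
  refine ⟨f, hfm, fun p ω => hKpsub p ω (hfmem p ω), ?_⟩
  intro ω y hy ε hε
  obtain ⟨j, hj⟩ := exists_pow_lt_of_lt_one (show (0:ℝ) < ε/2 by linarith)
    (show (1/2:ℝ) < 1 by norm_num)
  obtain ⟨m, hm⟩ := hx.exists_dist_lt y (by positivity : (0:ℝ) < (1/2)^j)
  refine ⟨(m, j), ?_⟩
  have hball : y ∈ Metric.closedBall (x m) ((1/2:ℝ)^j) := Metric.mem_closedBall.mpr hm.le
  have hnonempty : (K ω ∩ Metric.closedBall (x m) ((1/2:ℝ)^j)).Nonempty := ⟨y, hy, hball⟩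
  have hfmem' : f (m, j) ω ∈ K ω ∩ Metric.closedBall (x m) ((1/2:ℝ)^j) := by
    have := hfmem (m, j) ω
    simpa only [hKp, if_pos hnonempty] using this
  have h2 : dist (f (m, j) ω) (x m) ≤ (1/2:ℝ)^j := Metric.mem_closedBall.mp hfmem'.2
  calc dist y (f (m,j) ω) ≤ dist y (x m) + dist (x m) (f (m,j) ω) := dist_triangle _ _ _
    _ < (1/2)^j + (1/2)^j := by rw [dist_comm (x m)]; linarith [hm, h2]
    _ < ε := by linarith

set_option maxHeartbeats 1000000 in
theorem exists_argmax_selection [CompleteSpace X] [Nonempty X] [BorelSpace X] {K : Ω → Set X}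
    (hK : HitClosed K) (hc : ∀ ω, IsCompact (K ω)) (hne : ∀ ω, (K ω).Nonempty)
    (g : Ω → X → ℝ) (hgc : ∀ ω, Continuous (g ω)) (hgm : ∀ y, Measurable fun ω => g ω y) :
    ∃ W : Ω → X, Measurable W ∧ (∀ ω, W ω ∈ K ω) ∧
      ∀ ω, ∀ y ∈ K ω, g ω y ≤ g ω (W ω) := by
  have hgj : Measurable fun p : X × Ω => g p.2 p.1 := by
    have := measurable_uncurry_of_continuous_of_measurable
      (u := fun (y : X) (ω : Ω) => g ω y) hgc hgm
    exact this
  have hcomp : ∀ v : Ω → X, Measurable v → Measurable fun ω => g ω (v ω) := fun v hv =>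
    hgj.comp (hv.prodMk measurable_id)
  obtain ⟨f, hfm, hfmem, hfdense⟩ := exists_dense_selections hK hc hne
  set T : Ω → Set X := fun ω => K ω ∩ {y | ∀ y' ∈ K ω, g ω y' ≤ g ω y} with hT
  have hTsub : ∀ ω, T ω ⊆ K ω := fun ω => Set.inter_subset_left
  have hTne : ∀ ω, (T ω).Nonempty := by
    intro ω
    obtain ⟨y, hyK, hmax⟩ := (hc ω).exists_isMaxOn (hne ω) (hgc ω).continuousOn
    exact ⟨y, hyK, fun y' hy' => hmax hy'⟩
  have hTc : ∀ ω, IsCompact (T ω) := by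
    intro ω
    apply (hc ω).inter_right
    have : {y | ∀ y' ∈ K ω, g ω y' ≤ g ω y} = ⋂ y' ∈ K ω, {y | g ω y' ≤ g ω y} := by
      ext z; simp
    rw [this]
    exact isClosed_biInter fun y' _ => isClosed_le continuous_const (hgc ω)
  have hTm : HitClosed T := by
    intro C hC
    obtain ⟨h, hhm, hhmem, hhdense⟩ := exists_dense_selections (hK.interCond hC)
      (by
        intro ω
        split
        · exact (hc ω).inter_right hC
        · exact hc ω)
      (by
        intro ω
        split
        · assumption
        · exact hne ω)
    have key : {ω | (T ω ∩ C).Nonempty} =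
        {ω | (K ω ∩ C).Nonempty} ∩
          ⋂ (p : ℕ × ℕ) (q : {q : ℚ // 0 < q}), ⋃ (p' : ℕ × ℕ),
            {ω | g ω (f p ω) - (q:ℝ) < g ω (h p' ω)} := by
      ext ω
      simp only [Set.mem_inter_iff, Set.mem_setOf_eq, Set.mem_iInter, Set.mem_iUnion]
      constructor
      · rintro ⟨y, ⟨hyK, hymax⟩, hyC⟩
        refine ⟨⟨y, hyK, hyC⟩, ?_⟩
        intro p q
        -- continuity of g ω at y
        obtain ⟨δ, hδ, hcont⟩ := Metric.continuous_iff.mp (hgc ω) y (q:ℝ) (by exact_mod_cast q.2)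
        have hyKC : y ∈ (if (K ω ∩ C).Nonempty then K ω ∩ C else K ω) := by
          rw [if_pos ⟨y, hyK, hyC⟩]
          exact ⟨hyK, hyC⟩
        obtain ⟨p', hp'⟩ := hhdense ω y hyKC δ hδ
        refine ⟨p', ?_⟩
        have h1 : dist (g ω (h p' ω)) (g ω y) < (q:ℝ) := by
          apply hcont
          rw [dist_comm]; exact hp'
        have h2 : g ω (f p ω) ≤ g ω y := hymax _ (hfmem p ω)
        have := abs_lt.mp (by rwa [Real.dist_eq] at h1)
        linarith [this.1]
      · rintro ⟨hKC, hall⟩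
        obtain ⟨y, hyKC, hymax'⟩ := ((hc ω).inter_right hC).exists_isMaxOn hKC
          (hgc ω).continuousOn
        have hymax : ∀ y' ∈ K ω ∩ C, g ω y' ≤ g ω y := fun y' hy' => hymax' hy'
        refine ⟨y, ⟨hyKC.1, ?_⟩, hyKC.2⟩
        intro z hzK
        by_contra hcon
        push_neg at hcon
        set ε := g ω z - g ω y with hε
        have hεpos : 0 < ε := by simp [hε]; linarith
        obtain ⟨δ, hδ, hcont⟩ := Metric.continuous_iff.mp (hgc ω) z (ε/3) (by linarith)
        obtain ⟨p, hp⟩ := hfdense ω z hzK δ hδ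
        have h1 : g ω (f p ω) > g ω z - ε/3 := by
          have := hcont (f p ω) (by rw [dist_comm]; exact hp)
          have := abs_lt.mp (by rwa [Real.dist_eq] at this)
          linarith [this.1]
        obtain ⟨q, hq0, hq3⟩ := exists_rat_btwn (show (0:ℝ) < ε/3 by linarith)
        obtain ⟨p', hp'⟩ := hall p ⟨q, by exact_mod_cast hq0⟩
        have hh : h p' ω ∈ K ω ∩ C := by
          have := hhmem p' ω
          rwa [if_pos hKC] at this
        have h2 : g ω (h p' ω) ≤ g ω y := hymax _ hh
        linarith
    rw [key]
    refine (hK C hC).inter ?_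
    refine MeasurableSet.iInter fun p => MeasurableSet.iInter fun q => ?_
    refine MeasurableSet.iUnion fun p' => ?_
    exact measurableSet_lt ((hcomp _ (hfm p)).sub measurable_const) (hcomp _ (hhm p'))
  obtain ⟨W, hWm, hWmem⟩ := exists_selection hTm hTc hTne
  exact ⟨W, hWm, fun ω => hTsub ω (hWmem ω), fun ω y hy => (hWmem ω).2 y hy⟩

-- ### dot-product algebra in `Fin d → ℝ`
section DotAlg

theorem dotp_comm (a b : Fin d → ℝ) : dotp a b = dotp b a := by
  unfold dotp; exact Finset.sum_congr rfl fun j _ => mul_comm _ _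

@[simp] theorem dotp_zero_right (a : Fin d → ℝ) : dotp a 0 = 0 := by
  unfold dotp; simp

@[simp] theorem dotp_zero_left (a : Fin d → ℝ) : dotp 0 a = 0 := by
  unfold dotp; simp

theorem dotp_sub_left (a b c : Fin d → ℝ) : dotp (a - b) c = dotp a c - dotp b c := by
  unfold dotp
  rw [← Finset.sum_sub_distrib]
  exact Finset.sum_congr rfl fun j _ => by simp [sub_mul]

theorem dotp_smul_left (r : ℝ) (a b : Fin d → ℝ) : dotp (r • a) b = r * dotp a b := by
  unfold dotp
  rw [Finset.mul_sum]
  exact Finset.sum_congr rfl fun j _ => by simp [mul_assoc]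

theorem dotp_smul_right (r : ℝ) (a b : Fin d → ℝ) : dotp a (r • b) = r * dotp a b := by
  rw [dotp_comm, dotp_smul_left, dotp_comm]

theorem dotp_sum_left {ι : Type*} (s : Finset ι) (v : ι → Fin d → ℝ) (b : Fin d → ℝ) :
    dotp (∑ i ∈ s, v i) b = ∑ i ∈ s, dotp (v i) b := by
  unfold dotp
  rw [Finset.sum_comm]
  refine Finset.sum_congr rfl fun j _ => ?_
  rw [Finset.sum_apply, Finset.sum_mul]

theorem eucNorm_nonneg (a : Fin d → ℝ) : 0 ≤ eucNorm a := Real.sqrt_nonneg _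

theorem eucNorm_eq_zero_iff (a : Fin d → ℝ) : eucNorm a = 0 ↔ a = 0 := by
  unfold eucNorm
  rw [Real.sqrt_eq_zero (by positivity)]
  constructor
  · intro h
    funext j
    have h1 : ∀ i ∈ Finset.univ, (0:ℝ) ≤ a i ^ 2 := fun i _ => sq_nonneg _
    have := (Finset.sum_eq_zero_iff_of_nonneg h1).mp h j (Finset.mem_univ j)
    have := sq_eq_zero_iff.mp this
    simpa using this
  · intro h; rw [h]; simp

theorem dotp_self (a : Fin d → ℝ) : dotp a a = eucNorm a ^ 2 := by
  unfold dotp eucNorm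
  rw [Real.sq_sqrt (by positivity)]
  exact Finset.sum_congr rfl fun j _ => (sq (a j)).symm ▸ by ring

theorem eucNorm_smul (r : ℝ) (a : Fin d → ℝ) : eucNorm (r • a) = |r| * eucNorm a := by
  unfold eucNorm
  have : ∑ j, (r • a) j ^ 2 = r ^ 2 * ∑ j, a j ^ 2 := by
    rw [Finset.mul_sum]
    exact Finset.sum_congr rfl fun j _ => by simp [mul_pow]
  rw [this, Real.sqrt_mul (sq_nonneg r), Real.sqrt_sq_eq_abs]

theorem abs_dotp_le (a b : Fin d → ℝ) : |dotp a b| ≤ eucNorm a * eucNorm b := by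
  unfold dotp eucNorm
  have h1 : (∑ j, a j * b j) ^ 2 ≤ (∑ j, a j ^ 2) * ∑ j, b j ^ 2 :=
    Finset.sum_mul_sq_le_sq_mul_sq _ _ _
  have h2 : |∑ j, a j * b j| = Real.sqrt ((∑ j, a j * b j) ^ 2) :=
    (Real.sqrt_sq_eq_abs _).symm
  rw [h2, ← Real.sqrt_mul (by positivity)]
  exact Real.sqrt_le_sqrt h1

theorem continuous_dotp : Continuous fun p : (Fin d → ℝ) × (Fin d → ℝ) => dotp p.1 p.2 := by
  unfold dotp
  exact continuous_finset_sum _ fun j _ =>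
    (((continuous_apply j).comp continuous_fst).mul ((continuous_apply j).comp continuous_snd))

theorem continuous_dotp_left (b : Fin d → ℝ) : Continuous fun a => dotp a b :=
  continuous_dotp.comp (continuous_id.prodMk continuous_const)

theorem continuous_dotp_right (a : Fin d → ℝ) : Continuous fun b => dotp a b :=
  continuous_dotp.comp (continuous_const.prodMk continuous_id)

theorem continuous_eucNorm : Continuous (eucNorm (d := d)) := by
  unfold eucNorm
  exact Real.continuous_sqrt.comp (continuous_finset_sum _ fun j _ => (continuous_apply j).pow 2)

/-- The Gram–Schmidt style residual. -/
def Pp (e : ℕ → Fin d → ℝ) (i : ℕ) (y : Fin d → ℝ) : Fin d → ℝ :=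
  y - ∑ l ∈ Finset.range i, dotp y (e l) • e l

theorem Pp_succ (e : ℕ → Fin d → ℝ) (i : ℕ) (y : Fin d → ℝ) :
    Pp e (i + 1) y = Pp e i y - dotp y (e i) • e i := by
  unfold Pp
  rw [Finset.sum_range_succ, sub_add_eq_sub_sub]

theorem Pp_congr {e e' : ℕ → Fin d → ℝ} {i : ℕ} (h : ∀ l, l < i → e l = e' l)
    (y : Fin d → ℝ) : Pp e i y = Pp e' i y := by
  unfold Pp
  congr 1
  exact Finset.sum_congr rfl fun l hl => by rw [h l (Finset.mem_range.mp hl)]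

theorem continuous_Pp (e : ℕ → Fin d → ℝ) (i : ℕ) : Continuous (Pp e i) := by
  unfold Pp
  exact continuous_id.sub (continuous_finset_sum _ fun l _ =>
    (continuous_dotp_left (e l)).smul continuous_const)

end DotAlg

section PerOmega

theorem dotp_Pp {e : ℕ → Fin d → ℝ} {k : ℕ}
    (H1 : ∀ j, j < k → ∀ l, l < j → dotp (e j) (e l) = 0)
    (H2 : ∀ j, j < k → e j = 0 ∨ eucNorm (e j) = 1)
    {i l : ℕ} (hik : i ≤ k) (hl : l < i) (y : Fin d → ℝ) :
    dotp (Pp e i y) (e l) = 0 := by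
  unfold Pp
  rw [dotp_sub_left, dotp_sum_left]
  have hsum : ∑ l' ∈ Finset.range i, dotp (dotp y (e l') • e l') (e l)
      = dotp y (e l) * dotp (e l) (e l) := by
    rw [Finset.sum_eq_single l]
    · rw [dotp_smul_left]
    · intro l' hl' hne
      rw [dotp_smul_left]
      rcases lt_or_gt_of_ne hne with h | h
      · rw [dotp_comm (e l') (e l), H1 l (lt_of_lt_of_le hl hik) l' h, mul_zero]
      · rw [H1 l' (lt_of_lt_of_le (Finset.mem_range.mp hl') hik) l h, mul_zero]
    · intro h
      exact absurd (Finset.mem_range.mpr hl) h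
  rw [hsum]
  rcases H2 l (lt_of_lt_of_le hl hik) with h0 | h1
  · rw [h0]; simp
  · rw [dotp_self, h1]; ring

theorem dotp_Pp_self {e : ℕ → Fin d → ℝ} {k : ℕ}
    (H1 : ∀ j, j < k → ∀ l, l < j → dotp (e j) (e l) = 0)
    {i : ℕ} (hik : i < k) (y : Fin d → ℝ) :
    dotp (Pp e i y) (e i) = dotp y (e i) := by
  unfold Pp
  rw [dotp_sub_left, dotp_sum_left]
  have hsum : ∑ l' ∈ Finset.range i, dotp (dotp y (e l') • e l') (e i) = 0 := by
    apply Finset.sum_eq_zero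
    intro l' hl'
    rw [dotp_smul_left, dotp_comm (e l') (e i), H1 i hik l' (Finset.mem_range.mp hl'), mul_zero]
  rw [hsum, sub_zero]

theorem ortho_of_def {e w : ℕ → Fin d → ℝ} {k : ℕ}
    (Hdef : ∀ j, j < k → e j = (eucNorm (Pp e j (w j)))⁻¹ • Pp e j (w j)) :
    (∀ j, j < k → ∀ l, l < j → dotp (e j) (e l) = 0) ∧
      (∀ j, j < k → e j = 0 ∨ eucNorm (e j) = 1) := by
  have main : ∀ j, j < k →
      ((∀ l, l < j → dotp (e j) (e l) = 0) ∧ (e j = 0 ∨ eucNorm (e j) = 1)) := by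
    intro j
    induction j using Nat.strong_induction_on with
    | _ j ih =>
      intro hjk
      have H1' : ∀ j', j' < j → ∀ l, l < j' → dotp (e j') (e l) = 0 :=
        fun j' hj' l hl => (ih j' hj' (hj'.trans hjk)).1 l hl
      have H2' : ∀ j', j' < j → e j' = 0 ∨ eucNorm (e j') = 1 :=
        fun j' hj' => (ih j' hj' (hj'.trans hjk)).2
      constructor
      · intro l hl
        rw [Hdef j hjk, dotp_smul_left,
          dotp_Pp (k := j) H1' H2' le_rfl hl, mul_zero]
      · by_cases h0 : Pp e j (w j) = 0
        · left; rw [Hdef j hjk, h0, smul_zero]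
        · right
          rw [Hdef j hjk, eucNorm_smul, abs_of_nonneg (inv_nonneg.mpr (eucNorm_nonneg _))]
          have hne : eucNorm (Pp e j (w j)) ≠ 0 := fun h => h0 ((eucNorm_eq_zero_iff _).mp h)
          field_simp
  exact ⟨fun j hj => (main j hj).1, fun j hj => (main j hj).2⟩

theorem expand_w {e w : ℕ → Fin d → ℝ} {k : ℕ}
    (Hdef : ∀ j, j < k → e j = (eucNorm (Pp e j (w j)))⁻¹ • Pp e j (w j))
    {j : ℕ} (hjk : j < k) :
    w j = eucNorm (Pp e j (w j)) • e j + ∑ l ∈ Finset.range j, dotp (w j) (e l) • e l := by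
  have key : eucNorm (Pp e j (w j)) • e j = Pp e j (w j) := by
    rw [Hdef j hjk]
    by_cases h0 : Pp e j (w j) = 0
    · rw [h0]; simp
    · have hne : eucNorm (Pp e j (w j)) ≠ 0 := fun h => h0 ((eucNorm_eq_zero_iff _).mp h)
      rw [smul_smul, mul_inv_cancel₀ hne, one_smul]
  rw [key]
  unfold Pp
  abel

theorem coeff_bound {e : ℕ → Fin d → ℝ} {k : ℕ}
    (H1 : ∀ j, j < k → ∀ l, l < j → dotp (e j) (e l) = 0)
    (H2 : ∀ j, j < k → e j = 0 ∨ eucNorm (e j) = 1)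
    {j : ℕ} (hjk : j < k) (y : Fin d → ℝ) :
    |dotp y (e j)| ≤ eucNorm (Pp e j y) := by
  rw [← dotp_Pp_self H1 hjk y]
  rcases H2 j hjk with h0 | h1
  · rw [h0]; simp [eucNorm_nonneg]
  · calc |dotp (Pp e j y) (e j)| ≤ eucNorm (Pp e j y) * eucNorm (e j) := abs_dotp_le _ _
      _ = eucNorm (Pp e j y) := by rw [h1, mul_one]

theorem e_mem_span {e w : ℕ → Fin d → ℝ} {k : ℕ} {S : Set (Fin d → ℝ)}
    (Hdef : ∀ j, j < k → e j = (eucNorm (Pp e j (w j)))⁻¹ • Pp e j (w j))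
    (hwS : ∀ j, j < k → w j ∈ S) :
    ∀ j, j < k → e j ∈ Submodule.span ℝ S := by
  intro j
  induction j using Nat.strong_induction_on with
  | _ j ih =>
    intro hjk
    rw [Hdef j hjk]
    apply Submodule.smul_mem
    unfold Pp
    apply Submodule.sub_mem
    · exact Submodule.subset_span (hwS j hjk)
    · apply Submodule.sum_mem
      intro l hl
      exact Submodule.smul_mem _ _ (ih l (Finset.mem_range.mp hl)
        ((Finset.mem_range.mp hl).trans hjk))

set_option maxHeartbeats 1000000 in
theorem span_collapse {e w : ℕ → Fin d → ℝ} {k : ℕ} {S : Set (Fin d → ℝ)}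
    (Hdef : ∀ j, j < k → e j = (eucNorm (Pp e j (w j)))⁻¹ • Pp e j (w j))
    (hmax : ∀ j, j < k → ∀ y ∈ S, eucNorm (Pp e j y) ≤ eucNorm (Pp e j (w j)))
    (hwS : ∀ j, j < k → w j ∈ S)
    (hdim : Module.finrank ℝ (Submodule.span ℝ S) ≤ k) :
    ∀ y ∈ S, Pp e k y = 0 := by
  obtain ⟨H1, H2⟩ := ortho_of_def Hdef
  intro y hy
  by_cases hzero : ∃ j, j < k ∧ eucNorm (Pp e j (w j)) = 0
  · obtain ⟨j₀, hj₀k, hj₀⟩ := hzero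
    have hy0 : Pp e j₀ y = 0 := by
      rw [← eucNorm_eq_zero_iff]
      have := hmax j₀ hj₀k y hy
      rw [hj₀] at this
      exact le_antisymm this (eucNorm_nonneg _)
    have step : ∀ n, j₀ + n ≤ k → Pp e (j₀ + n) y = 0 := by
      intro n
      induction n with
      | zero => intro _; simpa using hy0
      | succ n ihn =>
        intro hle
        have hle' : j₀ + n ≤ k := by omega
        have h0 : Pp e (j₀ + n) y = 0 := ihn hle'
        have : j₀ + (n+1) = (j₀ + n) + 1 := by omega
        rw [this, Pp_succ, h0]
        have hd : dotp y (e (j₀ + n)) = 0 := by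
          rw [← dotp_Pp_self H1 (by omega) y, h0, dotp_zero_left]
        rw [hd, zero_smul, sub_zero]
    have := step (k - j₀) (by omega)
    rwa [Nat.add_sub_cancel' hj₀k.le] at this
  · push_neg at hzero
    have hunit : ∀ j, j < k → eucNorm (e j) = 1 := by
      intro j hjk
      rcases H2 j hjk with h0 | h1
      · exfalso
        apply hzero j hjk
        have : e j = (eucNorm (Pp e j (w j)))⁻¹ • Pp e j (w j) := Hdef j hjk
        by_contra hne
        have hP0 : Pp e j (w j) ≠ 0 := fun h =>
          hne (by rw [← eucNorm_eq_zero_iff] at h; exact h)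
        rw [h0] at this
        have := this.symm
        have h2 := smul_eq_zero.mp this
        rcases h2 with h2 | h2
        · exact absurd ((eucNorm_eq_zero_iff _).mp (inv_eq_zero.mp h2)) hP0
        · exact absurd h2 hP0
      · exact h1
    -- e 0, ..., e (k-1) is an orthonormal family, hence linearly independent
    set v : Fin k → Fin d → ℝ := fun j => e j with hv
    have hvv : ∀ i j : Fin k, i ≠ j → dotp (v i) (v j) = 0 := by
      intro i j hne
      show dotp (e (i:ℕ)) (e (j:ℕ)) = 0
      rcases lt_or_gt_of_ne (fun h : (i:ℕ) = (j:ℕ) => hne (Fin.ext h)) with h | h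
      · rw [dotp_comm (e (i:ℕ)) (e (j:ℕ))]
        exact H1 j j.2 i h
      · exact H1 i i.2 j h
    have hvself : ∀ i : Fin k, dotp (v i) (v i) = 1 := by
      intro i
      show dotp (e (i:ℕ)) (e (i:ℕ)) = 1
      rw [dotp_self, hunit i i.2, one_pow]
    have hli : LinearIndependent ℝ v := by
      rw [Fintype.linearIndependent_iff]
      intro c hc i
      have : dotp (∑ j : Fin k, c j • v j) (v i) = c i := by
        rw [dotp_sum_left]
        rw [Finset.sum_eq_single i]
        · rw [dotp_smul_left, hvself i, mul_one]
        · intro j _ hne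
          rw [dotp_smul_left, hvv j i hne, mul_zero]
        · intro h; exact absurd (Finset.mem_univ i) h
      rw [hc, dotp_zero_left] at this
      exact this.symm
    have hsub : Submodule.span ℝ (Set.range v) ≤ Submodule.span ℝ S := by
      rw [Submodule.span_le]
      rintro _ ⟨j, rfl⟩
      exact e_mem_span Hdef hwS j j.2
    have hrank : Module.finrank ℝ (Submodule.span ℝ (Set.range v)) = k := by
      rw [finrank_span_eq_card hli, Fintype.card_fin]
    have heqspan : Submodule.span ℝ (Set.range v) = Submodule.span ℝ S := by
      apply Submodule.eq_of_le_of_finrank_le hsub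
      rw [hrank]
      exact hdim
    have hyspan : y ∈ Submodule.span ℝ (Set.range v) := by
      rw [heqspan]
      exact Submodule.subset_span hy
    obtain ⟨c, hc⟩ := (Submodule.mem_span_range_iff_exists_fun ℝ).mp hyspan
    have hcoef : ∀ l : Fin k, dotp y (v l) = c l := by
      intro l
      rw [← hc, dotp_sum_left, Finset.sum_eq_single l]
      · rw [dotp_smul_left, hvself l, mul_one]
      · intro j _ hne
        rw [dotp_smul_left, hvv j l hne, mul_zero]
      · intro h; exact absurd (Finset.mem_univ l) h
    unfold Pp
    rw [sub_eq_zero]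
    calc y = ∑ j : Fin k, c j • v j := hc.symm
      _ = ∑ j : Fin k, dotp y (e (j:ℕ)) • e (j:ℕ) := by
          exact Finset.sum_congr rfl fun j _ => by rw [hcoef j]
      _ = ∑ l ∈ Finset.range k, dotp y (e l) • e l := by
          exact Fin.sum_univ_eq_sum_range (fun j => dotp y (e j) • e j) k

end PerOmega

section Repr

theorem two_pow_sum_range (n : ℕ) : ∑ t ∈ Finset.range n, (2:ℝ)^t = 2^n - 1 := by
  induction n with
  | zero => simp
  | succ n ih => rw [Finset.sum_range_succ, ih, pow_succ]; ring

theorem geom_aux {j k : ℕ} (hjk : j < k) :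
    ∑ i ∈ Finset.Ioo j k, (2:ℝ)^(k - 1 - i) = 2^(k - 1 - j) - 1 := by
  have h1 : Finset.Ioo j k = Finset.Ico (j+1) k := by
    ext i; simp [Finset.mem_Ioo, Finset.mem_Ico]
  rw [h1, Finset.sum_Ico_eq_sum_range]
  have h2 : ∀ t ∈ Finset.range (k - (j+1)), (2:ℝ)^(k - 1 - (j + 1 + t)) =
      (2:ℝ)^((k - (j+1)) - 1 - t) := by
    intro t ht
    congr 1
    omega
  rw [Finset.sum_congr rfl h2, Finset.sum_range_reflect (fun t => (2:ℝ)^t) (k - (j+1)),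
    two_pow_sum_range]
  have h3 : k - (j+1) = k - 1 - j := by omega
  rw [h3]

theorem sum_range_triangle {M : Type*} [AddCommMonoid M] (k : ℕ) (F : ℕ → ℕ → M) :
    ∑ i ∈ Finset.range k, ∑ l ∈ Finset.range i, F i l
      = ∑ l ∈ Finset.range k, ∑ i ∈ Finset.Ioo l k, F i l := by
  induction k with
  | zero => simp
  | succ k ih =>
    rw [Finset.sum_range_succ, ih, Finset.sum_range_succ]
    have h0 : Finset.Ioo k (k+1) = ∅ := by
      ext i; simp [Finset.mem_Ioo]
    rw [h0, Finset.sum_empty, add_zero]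
    have h1 : ∀ l ∈ Finset.range k, ∑ i ∈ Finset.Ioo l (k+1), F i l
        = ∑ i ∈ Finset.Ioo l k, F i l + F k l := by
      intro l hl
      have hlk : l < k := Finset.mem_range.mp hl
      have : Finset.Ioo l (k+1) = insert k (Finset.Ioo l k) := by
        ext i; simp [Finset.mem_Ioo, Finset.mem_insert]; omega
      rw [this, Finset.sum_insert (by simp [Finset.mem_Ioo])]
      rw [add_comm]
    rw [Finset.sum_congr rfl h1, Finset.sum_add_distrib]

set_option maxHeartbeats 1000000 in
theorem repr_main {e w : ℕ → Fin d → ℝ} {z : Fin d → ℝ} {k : ℕ} {lam : ℕ → ℝ}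
    (Hexp : ∀ j, j < k → w j = eucNorm (Pp e j (w j)) • e j
      + ∑ l ∈ Finset.range j, dotp (w j) (e l) • e l)
    (hmu : ∀ j, j < k → |dotp z (e j)| ≤ eucNorm (Pp e j (w j)))
    (hcb : ∀ i j, j < i → i < k → |dotp (w i) (e j)| ≤ eucNorm (Pp e j (w j)))
    (hz : z = ∑ l ∈ Finset.range k, dotp z (e l) • e l)
    (heq : ∀ j, j < k → lam j = (dotp z (e j)
      - ∑ i ∈ Finset.Ioo j k, lam i * dotp (w i) (e j)) / eucNorm (Pp e j (w j))) :
    (∀ j, j < k → |lam j| ≤ 2 ^ (k - 1 - j)) ∧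
      z = ∑ i ∈ Finset.range k, lam i • w i := by
  have hbound : ∀ m : ℕ, ∀ j, j < k → k - 1 - j ≤ m → |lam j| ≤ 2 ^ (k - 1 - j) := by
    intro m
    induction m with
    | zero =>
      intro j hjk hm
      have hj : j = k - 1 := by omega
      have hIoo : Finset.Ioo j k = ∅ := by
        ext i; simp [Finset.mem_Ioo]; omega
      rw [heq j hjk, hIoo, Finset.sum_empty, sub_zero]
      by_cases hd : eucNorm (Pp e j (w j)) = 0
      · rw [hd, div_zero, abs_zero]
        positivity
      · rw [abs_div, abs_of_nonneg (eucNorm_nonneg _)]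
        have hpos : 0 < eucNorm (Pp e j (w j)) :=
          lt_of_le_of_ne (eucNorm_nonneg _) (Ne.symm hd)
        rw [div_le_iff₀ hpos]
        have h2p : (1:ℝ) ≤ 2 ^ (k - 1 - j) := one_le_pow₀ (by norm_num)
        calc |dotp z (e j)| ≤ eucNorm (Pp e j (w j)) := hmu j hjk
          _ ≤ 2 ^ (k - 1 - j) * eucNorm (Pp e j (w j)) := by nlinarith [hpos, h2p]
    | succ m ih =>
      intro j hjk hm
      by_cases hm' : k - 1 - j ≤ m
      · exact ih j hjk hm'
      have hIH : ∀ i ∈ Finset.Ioo j k, |lam i| ≤ 2 ^ (k - 1 - i) := by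
        intro i hi
        have hi' := Finset.mem_Ioo.mp hi
        exact ih i hi'.2 (by omega)
      rw [heq j hjk]
      by_cases hd : eucNorm (Pp e j (w j)) = 0
      · rw [hd, div_zero, abs_zero]; positivity
      have hpos : 0 < eucNorm (Pp e j (w j)) :=
        lt_of_le_of_ne (eucNorm_nonneg _) (Ne.symm hd)
      rw [abs_div, abs_of_nonneg (eucNorm_nonneg _), div_le_iff₀ hpos]
      have hsumb : |∑ i ∈ Finset.Ioo j k, lam i * dotp (w i) (e j)|
          ≤ (2 ^ (k - 1 - j) - 1) * eucNorm (Pp e j (w j)) := by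
        calc |∑ i ∈ Finset.Ioo j k, lam i * dotp (w i) (e j)|
            ≤ ∑ i ∈ Finset.Ioo j k, |lam i * dotp (w i) (e j)| :=
              Finset.abs_sum_le_sum_abs _ _
          _ ≤ ∑ i ∈ Finset.Ioo j k, 2 ^ (k - 1 - i) * eucNorm (Pp e j (w j)) := by
              apply Finset.sum_le_sum
              intro i hi
              have hi' := Finset.mem_Ioo.mp hi
              rw [abs_mul]
              have h1 := hIH i hi
              have h2 := hcb i j hi'.1 hi'.2
              have h3 : (0:ℝ) ≤ |dotp (w i) (e j)| := abs_nonneg _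
              nlinarith [abs_nonneg (lam i)]
          _ = (2 ^ (k - 1 - j) - 1) * eucNorm (Pp e j (w j)) := by
              rw [← Finset.sum_mul, geom_aux hjk]
      calc |dotp z (e j) - ∑ i ∈ Finset.Ioo j k, lam i * dotp (w i) (e j)|
          ≤ |dotp z (e j)| + |∑ i ∈ Finset.Ioo j k, lam i * dotp (w i) (e j)| :=
            abs_sub _ _
        _ ≤ eucNorm (Pp e j (w j)) + (2 ^ (k - 1 - j) - 1) * eucNorm (Pp e j (w j)) := by
            have := hmu j hjk
            linarith [hsumb]
        _ = 2 ^ (k - 1 - j) * eucNorm (Pp e j (w j)) := by ring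
  have hbound' : ∀ j, j < k → |lam j| ≤ 2 ^ (k - 1 - j) :=
    fun j hjk => hbound (k - 1 - j) j hjk le_rfl
  refine ⟨hbound', ?_⟩
  -- the coefficient identity
  have hco : ∀ j, j < k → lam j * eucNorm (Pp e j (w j))
      + ∑ i ∈ Finset.Ioo j k, lam i * dotp (w i) (e j) = dotp z (e j) := by
    intro j hjk
    by_cases hd : eucNorm (Pp e j (w j)) = 0
    · have hmu0 : dotp z (e j) = 0 := by
        have := hmu j hjk
        rw [hd] at this
        exact abs_eq_zero.mp (le_antisymm this (abs_nonneg _))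
      have hc0 : ∀ i ∈ Finset.Ioo j k, lam i * dotp (w i) (e j) = 0 := by
        intro i hi
        have hi' := Finset.mem_Ioo.mp hi
        have := hcb i j hi'.1 hi'.2
        rw [hd] at this
        rw [abs_eq_zero.mp (le_antisymm this (abs_nonneg _)), mul_zero]
      rw [hd, mul_zero, zero_add, Finset.sum_eq_zero hc0, hmu0]
    · rw [heq j hjk, div_mul_cancel₀ _ hd]
      ring
  -- substitute and exchange sums
  calc z = ∑ l ∈ Finset.range k, dotp z (e l) • e l := hz
    _ = ∑ l ∈ Finset.range k, ((lam l * eucNorm (Pp e l (w l))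
          + ∑ i ∈ Finset.Ioo l k, lam i * dotp (w i) (e l)) • e l) := by
        refine Finset.sum_congr rfl fun l hl => ?_
        rw [hco l (Finset.mem_range.mp hl)]
    _ = ∑ l ∈ Finset.range k, ((lam l * eucNorm (Pp e l (w l))) • e l)
          + ∑ l ∈ Finset.range k, ((∑ i ∈ Finset.Ioo l k, lam i * dotp (w i) (e l)) • e l) := by
        rw [← Finset.sum_add_distrib]
        exact Finset.sum_congr rfl fun l _ => add_smul _ _ _
    _ = ∑ l ∈ Finset.range k, ((lam l * eucNorm (Pp e l (w l))) • e l)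
          + ∑ l ∈ Finset.range k, ∑ i ∈ Finset.Ioo l k, (lam i * dotp (w i) (e l)) • e l := by
        congr 1
        exact Finset.sum_congr rfl fun l _ => Finset.sum_smul
    _ = ∑ l ∈ Finset.range k, ((lam l * eucNorm (Pp e l (w l))) • e l)
          + ∑ i ∈ Finset.range k, ∑ l ∈ Finset.range i, (lam i * dotp (w i) (e l)) • e l := by
        rw [sum_range_triangle k (fun i l => (lam i * dotp (w i) (e l)) • e l)]
    _ = ∑ i ∈ Finset.range k, lam i • w i := by
        rw [← Finset.sum_add_distrib]
        refine Finset.sum_congr rfl fun i hi => ?_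
        have hik := Finset.mem_range.mp hi
        conv_rhs => rw [Hexp i hik]
        rw [smul_add, smul_smul, Finset.smul_sum]
        congr 1
        exact Finset.sum_congr rfl fun l _ => (smul_smul _ _ _).symm
end Repr

section WE

theorem measurable_dotp_comp {u v : Ω → Fin d → ℝ} (hu : Measurable u) (hv : Measurable v) :
    Measurable fun ω => dotp (u ω) (v ω) :=
  continuous_dotp.measurable.comp (hu.prodMk hv)

theorem measurable_smul_comp {r : Ω → ℝ} {v : Ω → Fin d → ℝ}
    (hr : Measurable r) (hv : Measurable v) : Measurable fun ω => r ω • v ω :=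
  (continuous_smul : Continuous fun p : ℝ × (Fin d → ℝ) => p.1 • p.2).measurable.comp
    (hr.prodMk hv)

theorem measurable_Pp_comp {e : ℕ → Ω → Fin d → ℝ} (he : ∀ l, Measurable (e l)) (i : ℕ)
    {v : Ω → Fin d → ℝ} (hv : Measurable v) :
    Measurable fun ω => Pp (fun l => e l ω) i (v ω) := by
  unfold Pp
  apply Measurable.sub hv
  apply Finset.measurable_sum
  intro l _
  exact measurable_smul_comp (measurable_dotp_comp hv (he l)) (he l)

set_option maxHeartbeats 1000000 in
theorem exists_WE {K : Ω → Set (Fin d → ℝ)} (hK : HitClosed K)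
    (hc : ∀ ω, IsCompact (K ω)) (hne : ∀ ω, (K ω).Nonempty) (k : ℕ) :
    ∃ W e : ℕ → Ω → Fin d → ℝ,
      (∀ j, Measurable (W j)) ∧ (∀ j, Measurable (e j)) ∧
      (∀ j, j < k → ∀ ω, W j ω ∈ K ω) ∧
      (∀ j, j < k → ∀ ω, e j ω =
        (eucNorm (Pp (fun l => e l ω) j (W j ω)))⁻¹ • Pp (fun l => e l ω) j (W j ω)) ∧
      (∀ j, j < k → ∀ ω, ∀ y ∈ K ω,
        eucNorm (Pp (fun l => e l ω) j y) ≤ eucNorm (Pp (fun l => e l ω) j (W j ω))) := by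
  induction k with
  | zero =>
    exact ⟨fun _ _ => 0, fun _ _ => 0, fun _ => measurable_const, fun _ => measurable_const,
      fun j hj => absurd hj (Nat.not_lt_zero j), fun j hj => absurd hj (Nat.not_lt_zero j),
      fun j hj => absurd hj (Nat.not_lt_zero j)⟩
  | succ k ih =>
    obtain ⟨W, e, hWm, hem, hWmem, hedef, hmax⟩ := ih
    -- the objective function for the next argmax
    set g : Ω → (Fin d → ℝ) → ℝ := fun ω y => eucNorm (Pp (fun l => e l ω) k y) with hg
    have hgc : ∀ ω, Continuous (g ω) :=
      fun ω => continuous_eucNorm.comp (continuous_Pp _ k)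
    have hgm : ∀ y, Measurable fun ω => g ω y := by
      intro y
      exact continuous_eucNorm.measurable.comp (measurable_Pp_comp hem k measurable_const)
    obtain ⟨W', hW'm, hW'mem, hW'max⟩ := exists_argmax_selection hK hc hne g hgc hgm
    set Wn : ℕ → Ω → Fin d → ℝ := fun j => if j = k then W' else W j with hWn
    set en : ℕ → Ω → Fin d → ℝ := fun j => if j = k then
        (fun ω => (eucNorm (Pp (fun l => e l ω) k (W' ω)))⁻¹ • Pp (fun l => e l ω) k (W' ω))
      else e j with hen
    have hlt : ∀ l, l < k → en l = e l := by
      intro l hl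
      simp only [hen, if_neg (Nat.ne_of_lt hl)]
    have hPp_eq : ∀ i, i ≤ k → ∀ ω y, Pp (fun l => en l ω) i y = Pp (fun l => e l ω) i y := by
      intro i hi ω y
      apply Pp_congr
      intro l hl
      rw [hlt l (lt_of_lt_of_le hl hi)]
    refine ⟨Wn, en, ?_, ?_, ?_, ?_, ?_⟩
    · intro j
      simp only [hWn]
      split
      · exact hW'm
      · exact hWm j
    · intro j
      simp only [hen]
      split
      · exact measurable_smul_comp
          ((continuous_eucNorm.measurable.comp (measurable_Pp_comp hem k hW'm)).inv)
          (measurable_Pp_comp hem k hW'm)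
      · exact hem j
    · intro j hj ω
      simp only [hWn]
      split
      · exact hW'mem ω
      · exact hWmem j (by omega) ω
    · intro j hj ω
      rcases Nat.lt_succ_iff_lt_or_eq.mp hj with hjk | rfl
      · rw [hPp_eq j hjk.le ω]
        have h1 : en j ω = e j ω := by rw [hlt j hjk]
        have h2 : Wn j ω = W j ω := by simp only [hWn, if_neg (Nat.ne_of_lt hjk)]
        rw [h1, h2]
        exact hedef j hjk ω
      · rw [hPp_eq j le_rfl ω]
        have h2 : Wn j ω = W' ω := by simp only [hWn, if_pos rfl]
        have h1 : en j ω = (eucNorm (Pp (fun l => e l ω) j (W' ω)))⁻¹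
            • Pp (fun l => e l ω) j (W' ω) := by simp only [hen, if_pos rfl]
        rw [h1, h2]
    · intro j hj ω y hy
      rcases Nat.lt_succ_iff_lt_or_eq.mp hj with hjk | rfl
      · rw [hPp_eq j hjk.le ω, hPp_eq j hjk.le ω]
        have h2 : Wn j ω = W j ω := by simp only [hWn, if_neg (Nat.ne_of_lt hjk)]
        rw [h2]
        exact hmax j hjk ω y hy
      · rw [hPp_eq j le_rfl ω, hPp_eq j le_rfl ω]
        have h2 : Wn j ω = W' ω := by simp only [hWn, if_pos rfl]
        rw [h2]
        exact hW'max ω y hy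

end WE

end RS19

end RS19Section

set_option maxHeartbeats 2000000

/-- For a compact-valued measurable random set `K` containing `0` with
`dim K ≤ k` a.s., there are measurable selections `Y¹,…,Y^k` of `K` such that every
measurable a.s.-selection `Z` of `K` can be written a.s. as `Z = ∑ λ_i Y^i` with
measurable coefficients `|λ_i| ≤ 2^{i-1}`. -/
theorem randomSet_spanning_selections
    (P : Measure Ω) [IsProbabilityMeasure P]
    (K : Ω → Set (Fin d → ℝ)) (k : ℕ) (hk : k ≤ d)
    (hmeas : MeasRandomSet m0 K)
    (hcpt : ∀ ω, IsCompact (K ω))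
    (h0 : ∀ ω, (0 : Fin d → ℝ) ∈ K ω)
    (hdim : ∀ᵐ ω ∂P, Module.finrank ℝ (Submodule.span ℝ (K ω)) ≤ k) :
    ∃ Y : Fin k → Ω → Fin d → ℝ,
      (∀ i, Measurable (Y i)) ∧ (∀ i ω, Y i ω ∈ K ω) ∧
      ∀ Z : Ω → Fin d → ℝ, Measurable Z → (∀ᵐ ω ∂P, Z ω ∈ K ω) →
        ∃ lam : Fin k → Ω → ℝ, (∀ i, Measurable (lam i)) ∧
          (∀ i ω, |lam i ω| ≤ 2 ^ (i : ℕ)) ∧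
          ∀ᵐ ω ∂P, Z ω = fun j => ∑ i, lam i ω * Y i ω j := by
  classical
  have hKcl : RS19.HitClosed K := RS19.hitClosed_of_hitOpen hmeas hcpt
  have hne : ∀ ω, (K ω).Nonempty := fun ω => ⟨0, h0 ω⟩
  obtain ⟨W, e, hWm, hem, hWmem, hedef, hmax⟩ := RS19.exists_WE hKcl hcpt hne k
  refine ⟨fun i => W (k - 1 - (i : ℕ)), fun i => hWm _,
    fun i ω => hWmem _ (by have := i.isLt; omega) ω, ?_⟩
  intro Z hZm hZK
  -- the recursively defined coefficients
  set lv : ℕ → Ω → ℕ → ℝ := fun m => Nat.rec (fun _ _ => 0) (fun m prev ω j =>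
    if j = k - 1 - m then
      (dotp (Z ω) (e j ω) - ∑ i ∈ Finset.Ioo j k, prev ω i * dotp (W i ω) (e j ω))
        / eucNorm (RS19.Pp (fun l => e l ω) j (W j ω))
    else prev ω j) m with hlv
  have hlvs : ∀ m ω j, lv (m+1) ω j = if j = k - 1 - m then
      (dotp (Z ω) (e j ω) - ∑ i ∈ Finset.Ioo j k, lv m ω i * dotp (W i ω) (e j ω))
        / eucNorm (RS19.Pp (fun l => e l ω) j (W j ω))
    else lv m ω j := fun m ω j => rfl
  set lam0 : ℕ → Ω → ℝ := fun j ω => lv k ω j with hlam0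
  have stab : ∀ t m, m + t ≤ k → ∀ ω j, k - m ≤ j → lv (m + t) ω j = lv m ω j := by
    intro t
    induction t with
    | zero => intro m _ ω j _; rfl
    | succ t iht =>
      intro m hm ω j hj
      have h1 : m + (t+1) = (m + t) + 1 := rfl
      rw [h1, hlvs, if_neg (by omega)]
      exact iht m (by omega) ω j hj
  have hstab' : ∀ m, m ≤ k → ∀ ω j, k - m ≤ j → lam0 j ω = lv m ω j := by
    intro m hm ω j hj
    have h1 : lam0 j ω = lv (m + (k - m)) ω j := by
      rw [Nat.add_sub_cancel' hm]
    rw [h1, stab (k - m) m (by omega) ω j hj]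
  have heqn : ∀ ω j, j < k → lam0 j ω = (dotp (Z ω) (e j ω)
      - ∑ i ∈ Finset.Ioo j k, lam0 i ω * dotp (W i ω) (e j ω))
        / eucNorm (RS19.Pp (fun l => e l ω) j (W j ω)) := by
    intro ω j hj
    have hjm : j = k - 1 - (k - 1 - j) := by omega
    have h1 : lam0 j ω = lv ((k - 1 - j) + 1) ω j :=
      hstab' ((k - 1 - j) + 1) (by omega) ω j (by omega)
    have h2 : ∀ i ∈ Finset.Ioo j k, lv (k - 1 - j) ω i * dotp (W i ω) (e j ω)
        = lam0 i ω * dotp (W i ω) (e j ω) := by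
      intro i hi
      have hi' := Finset.mem_Ioo.mp hi
      rw [← hstab' (k - 1 - j) (by omega) ω i (by omega)]
    rw [h1, hlvs, if_pos hjm, Finset.sum_congr rfl h2]
  have hlvm : ∀ m j, Measurable fun ω => lv m ω j := by
    intro m
    induction m with
    | zero => intro j; exact measurable_const
    | succ m ihm =>
      intro j
      have h1 : (fun ω => lv (m+1) ω j) = fun ω => if j = k - 1 - m then
          (dotp (Z ω) (e j ω) - ∑ i ∈ Finset.Ioo j k, lv m ω i * dotp (W i ω) (e j ω))
            / eucNorm (RS19.Pp (fun l => e l ω) j (W j ω))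
        else lv m ω j := funext fun ω => hlvs m ω j
      rw [h1]
      by_cases hj : j = k - 1 - m
      · simp only [if_pos hj]
        apply Measurable.div
        · apply Measurable.sub
          · exact RS19.measurable_dotp_comp hZm (hem j)
          · apply Finset.measurable_sum
            intro i _
            exact (ihm i).mul (RS19.measurable_dotp_comp (hWm i) (hem j))
        · exact RS19.continuous_eucNorm.measurable.comp
            (RS19.measurable_Pp_comp hem j (hWm j))
      · simp only [if_neg hj]
        exact ihm j
  refine ⟨fun i ω => max (-(2 ^ (i:ℕ) : ℝ)) (min (2 ^ (i:ℕ) : ℝ) (lam0 (k - 1 - (i:ℕ)) ω)),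
    ?_, ?_, ?_⟩
  · intro i
    exact measurable_const.max (measurable_const.min (hlvm k _))
  · intro i ω
    have hB : (0:ℝ) ≤ 2 ^ (i:ℕ) := by positivity
    refine abs_le.mpr ⟨le_max_left _ _, max_le (by linarith) (min_le_left _ _)⟩
  · filter_upwards [hZK, hdim] with ω hZω hdimω
    have hDef : ∀ j, j < k → (fun l => e l ω) j =
        (eucNorm (RS19.Pp (fun l => e l ω) j ((fun j => W j ω) j)))⁻¹
          • RS19.Pp (fun l => e l ω) j ((fun j => W j ω) j) := fun j hj => hedef j hj ω
    obtain ⟨H1, H2⟩ := RS19.ortho_of_def hDef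
    have Hexp : ∀ j, j < k → (fun j => W j ω) j =
        eucNorm (RS19.Pp (fun l => e l ω) j ((fun j => W j ω) j)) • (fun l => e l ω) j
          + ∑ l ∈ Finset.range j, dotp ((fun j => W j ω) j) ((fun l => e l ω) l)
            • (fun l => e l ω) l :=
      fun j hj => RS19.expand_w hDef hj
    have hPkz : RS19.Pp (fun l => e l ω) k (Z ω) = 0 :=
      RS19.span_collapse hDef (fun j hj y hy => hmax j hj ω y hy)
        (fun j hj => hWmem j hj ω) hdimω (Z ω) hZω
    have hzrep : Z ω = ∑ l ∈ Finset.range k,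
        dotp (Z ω) ((fun l => e l ω) l) • (fun l => e l ω) l := by
      have h1 : Z ω - ∑ l ∈ Finset.range k,
          dotp (Z ω) ((fun l => e l ω) l) • (fun l => e l ω) l = 0 := hPkz
      exact sub_eq_zero.mp h1
    have hmu : ∀ j, j < k → |dotp (Z ω) ((fun l => e l ω) j)|
        ≤ eucNorm (RS19.Pp (fun l => e l ω) j ((fun j => W j ω) j)) := by
      intro j hj
      calc |dotp (Z ω) (e j ω)| ≤ eucNorm (RS19.Pp (fun l => e l ω) j (Z ω)) :=
          RS19.coeff_bound H1 H2 hj (Z ω)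
        _ ≤ _ := hmax j hj ω (Z ω) hZω
    have hcb : ∀ i j, j < i → i < k → |dotp ((fun j => W j ω) i) ((fun l => e l ω) j)|
        ≤ eucNorm (RS19.Pp (fun l => e l ω) j ((fun j => W j ω) j)) := by
      intro i j hji hik
      calc |dotp (W i ω) (e j ω)| ≤ eucNorm (RS19.Pp (fun l => e l ω) j (W i ω)) :=
          RS19.coeff_bound H1 H2 (hji.trans hik) (W i ω)
        _ ≤ _ := hmax j (hji.trans hik) ω (W i ω) (hWmem i hik ω)
    obtain ⟨hbnd, hrep⟩ := RS19.repr_main (z := Z ω) (lam := fun j => lam0 j ω)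
      Hexp hmu hcb hzrep (fun j hj => heqn ω j hj)
    have h1 : ∀ i : Fin k,
        max (-(2 ^ (i:ℕ) : ℝ)) (min (2 ^ (i:ℕ) : ℝ) (lam0 (k - 1 - (i:ℕ)) ω))
          = lam0 (k - 1 - (i:ℕ)) ω := by
      intro i
      have hb := hbnd (k - 1 - (i:ℕ)) (by have := i.isLt; omega)
      have hexp : k - 1 - (k - 1 - (i:ℕ)) = (i:ℕ) := by have := i.isLt; omega
      rw [hexp] at hb
      have hab := abs_le.mp hb
      rw [min_eq_right hab.2, max_eq_right hab.1]
    have key : Z ω = ∑ i : Fin k,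
        (max (-(2 ^ (i:ℕ) : ℝ)) (min (2 ^ (i:ℕ) : ℝ) (lam0 (k - 1 - (i:ℕ)) ω)))
          • W (k - 1 - (i:ℕ)) ω := by
      calc Z ω = ∑ i ∈ Finset.range k, lam0 i ω • W i ω := hrep
        _ = ∑ t ∈ Finset.range k, lam0 (k - 1 - t) ω • W (k - 1 - t) ω :=
            (Finset.sum_range_reflect (fun t => lam0 t ω • W t ω) k).symm
        _ = ∑ i : Fin k, lam0 (k - 1 - (i:ℕ)) ω • W (k - 1 - (i:ℕ)) ω :=
            (Fin.sum_univ_eq_sum_range (fun t => lam0 (k - 1 - t) ω • W (k - 1 - t) ω) k).symm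
        _ = _ := Finset.sum_congr rfl fun i _ => by rw [h1 i]
    rw [key]
    funext j
    rw [Finset.sum_apply]
    exact Finset.sum_congr rfl fun i _ => by simp

end
end
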